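/- arXiv:0802.1111 — 5 statements merged into one kernel-verified Lean document; each statement's English description precedes it below -/
import Mathlib

section
/- Let Ω ⊆ ℝⁿ be open, let b : Ω → ℝ be twice continuously differentiable, and suppose there exists p₀ > 0 such that −Δb(x) + (p₀/2)|∇b(x)|² ≥ 0 for all x ∈ Ω. Then for every nonempty bounded open set Ω' whose closure is contained in Ω, the minimum of b over the closure of Ω' equals the minimum of b over the topological boundary of Ω'. -/
open Set Filter Topology

/-- The Laplacian `Δb(x) = ∑ i, ∂²b/∂xᵢ²(x)`. -/
noncomputable def lap {n : ℕ} (b : EuclideanSpace ℝ (Fin n) → ℝ)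
    (x : EuclideanSpace ℝ (Fin n)) : ℝ :=
  ∑ i : Fin n, fderiv ℝ (fun y => fderiv ℝ b y (EuclideanSpace.single i 1)) x
      (EuclideanSpace.single i 1)

/-- Second derivative test: at an interior local maximum, the second directional
derivative in any direction is nonpositive. -/
theorem second_deriv_test {E : Type*} [NormedAddCommGroup E] [NormedSpace ℝ E] {w : E → ℝ}
    {x v : E} (hmax : IsLocalMax w x)
    (hw : ∀ᶠ y in 𝓝 x, DifferentiableAt ℝ w y)
    (h2 : DifferentiableAt ℝ (fun y => fderiv ℝ w y v) x) :
    fderiv ℝ (fun y => fderiv ℝ w y v) x v ≤ 0 := by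
  by_contra hcon
  push_neg at hcon
  set c := fderiv ℝ (fun y => fderiv ℝ w y v) x v with hcdef
  set L : ℝ → E := fun t => x + t • v with hLdef
  have hLd : ∀ t : ℝ, HasDerivAt L v t := fun t => by
    rw [hLdef]; simpa using ((hasDerivAt_id t).smul_const v).const_add x
  have hL0 : L 0 = x := by simp [hLdef]
  have hLc : Continuous L := by fun_prop
  set h : ℝ → ℝ := fun t => fderiv ℝ w (L t) v with hhdef
  have hh0 : h 0 = 0 := by simp [hhdef, hL0, hmax.fderiv_eq_zero]
  have hhd : HasDerivAt h c 0 := by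
    have h2' : HasFDerivAt (fun y => fderiv ℝ w y v) (fderiv ℝ (fun y => fderiv ℝ w y v) x)
        (L 0) := by
      rw [hL0]; exact h2.hasFDerivAt
    simpa [hhdef, Function.comp_def] using h2'.comp_hasDerivAt 0 (hLd 0)
  have hslope : Tendsto (slope h 0) (𝓝[≠] (0:ℝ)) (𝓝 c) := hasDerivAt_iff_tendsto_slope.mp hhd
  have hpos : ∀ᶠ t in 𝓝[>] (0:ℝ), 0 < h t := by
    have h1 : ∀ᶠ t in 𝓝[≠] (0:ℝ), 0 < slope h 0 t := hslope.eventually (eventually_gt_nhds hcon)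
    have h2' : ∀ᶠ t in 𝓝[>] (0:ℝ), 0 < slope h 0 t :=
      h1.filter_mono (nhdsWithin_mono _ (fun t ht => ne_of_gt ht))
    filter_upwards [h2', self_mem_nhdsWithin] with t hst ht
    have hts : slope h 0 t = t⁻¹ * h t := by simp [slope, hh0]
    rw [hts] at hst
    have ht' : (0:ℝ) < t := ht
    have := mul_pos ht' hst
    rwa [mul_inv_cancel_left₀ (ne_of_gt ht')] at this
  have hA : Tendsto L (𝓝 0) (𝓝 x) := by
    have := hLc.tendsto 0
    rwa [hL0] at this
  have hnb : ∀ᶠ t in 𝓝 (0:ℝ), DifferentiableAt ℝ w (L t) ∧ w (L t) ≤ w x :=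
    (hA.eventually hw).and (hA.eventually hmax)
  rw [Metric.eventually_nhds_iff] at hnb
  obtain ⟨r, hr, hball⟩ := hnb
  obtain ⟨u, hu, hIoo⟩ := (mem_nhdsGT_iff_exists_Ioo_subset).mp hpos
  have hu0 : (0:ℝ) < u := hu
  set δ := min r u / 2 with hδdef
  have hδpos : 0 < δ := by
    have : 0 < min r u := lt_min hr hu0
    positivity
  have hδr : δ < r := by
    have : min r u ≤ r := min_le_left _ _
    rw [hδdef]; linarith
  have hδu : δ < u := by
    have : min r u ≤ u := min_le_right _ _
    rw [hδdef]; linarith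
  have hdiff : ∀ t ∈ Icc (0:ℝ) δ, DifferentiableAt ℝ w (L t) := by
    intro t ht
    apply (hball (y := t) ?_).1
    rw [Real.dist_eq, sub_zero, abs_of_nonneg ht.1]
    exact lt_of_le_of_lt ht.2 hδr
  have hg : StrictMonoOn (fun t => w (L t)) (Icc (0:ℝ) δ) := by
    apply strictMonoOn_of_deriv_pos (convex_Icc 0 δ)
    · intro t ht
      exact (((hdiff t ht).comp t (hLd t).differentiableAt).continuousAt).continuousWithinAt
    · intro t ht
      rw [interior_Icc] at ht
      have hder : HasDerivAt (fun t => w (L t)) (h t) t :=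
        (hdiff t ⟨le_of_lt ht.1, le_of_lt ht.2⟩).hasFDerivAt.comp_hasDerivAt t (hLd t)
      rw [hder.deriv]
      exact hIoo ⟨ht.1, lt_trans ht.2 hδu⟩
  have hlt : w (L 0) < w (L δ) :=
    hg (left_mem_Icc.mpr (le_of_lt hδpos)) (right_mem_Icc.mpr (le_of_lt hδpos)) hδpos
  have hle : w (L δ) ≤ w x := by
    apply (hball (y := δ) ?_).2
    rw [Real.dist_eq, sub_zero, abs_of_nonneg (le_of_lt hδpos)]
    exact hδr
  rw [hL0] at hlt
  linarith

/-- The squared norm of a continuous linear functional on Euclidean space is the sum of the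
squares of its values on the standard basis. -/
theorem norm_dual_sq {n : ℕ} (f : EuclideanSpace ℝ (Fin n) →L[ℝ] ℝ) :
    ‖f‖ ^ 2 = ∑ i : Fin n, (f (EuclideanSpace.single i 1)) ^ 2 := by
  set y := (InnerProductSpace.toDual ℝ (EuclideanSpace ℝ (Fin n))).symm f with hy
  have hfz : ∀ z, f z = inner ℝ y z := fun z => (InnerProductSpace.toDual_symm_apply).symm
  have hnf : ‖f‖ = ‖y‖ := ((InnerProductSpace.toDual ℝ _).symm.norm_map f).symm
  rw [hnf, ← real_inner_self_eq_norm_sq]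
  have hin : (inner ℝ y y : ℝ) = ∑ i, y i * y i := by
    rw [PiLp.inner_apply]; simp [RCLike.inner_apply, mul_comm, sq]
  rw [hin]
  refine Finset.sum_congr rfl fun i _ => ?_
  rw [hfz, EuclideanSpace.inner_single_right]
  simp [sq]

/-- Maximum principle for strict subsolutions: a function with strictly positive Laplacian on a
bounded open set attains its maximum over the closure on the frontier. -/
theorem frontier_max {n : ℕ} {Ω' : Set (EuclideanSpace ℝ (Fin n))}
    (hne : Ω'.Nonempty) (ho : IsOpen Ω') (hbd : Bornology.IsBounded Ω')
    (w : EuclideanSpace ℝ (Fin n) → ℝ) (hc : ContinuousOn w (closure Ω'))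
    (hd1 : ∀ x ∈ Ω', ∀ᶠ y in 𝓝 x, DifferentiableAt ℝ w y)
    (hd2 : ∀ x ∈ Ω', ∀ i : Fin n,
      DifferentiableAt ℝ (fun y => fderiv ℝ w y (EuclideanSpace.single i 1)) x)
    (hlap : ∀ x ∈ Ω', 0 < lap w x) :
    ∃ z ∈ frontier Ω', ∀ x ∈ closure Ω', w x ≤ w z := by
  have hK : IsCompact (closure Ω') := hbd.isCompact_closure
  obtain ⟨z, hzK, hz⟩ := hK.exists_isMaxOn hne.closure hc
  have hzF : z ∈ frontier Ω' := by
    rw [ho.frontier_eq]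
    refine ⟨hzK, fun hzΩ' => ?_⟩
    have hlm : IsLocalMax w z :=
      hz.isLocalMax (Filter.mem_of_superset (ho.mem_nhds hzΩ') subset_closure)
    have : lap w z ≤ 0 := by
      apply Finset.sum_nonpos
      intro i _
      exact second_deriv_test hlm (hd1 z hzΩ') (hd2 z hzΩ' i)
    linarith [hlap z hzΩ']
  exact ⟨z, hzF, fun x hx => hz hx⟩

/-- A nonempty bounded set in a nontrivial Euclidean space has nonempty frontier. -/
theorem frontier_ne {n : ℕ} (hn : 1 ≤ n) {Ω' : Set (EuclideanSpace ℝ (Fin n))}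
    (hne : Ω'.Nonempty) (hbd : Bornology.IsBounded Ω') :
    (frontier Ω').Nonempty := by
  haveI : Nontrivial (EuclideanSpace ℝ (Fin n)) := by
    refine ⟨0, EuclideanSpace.single ⟨0, hn⟩ 1, fun h => ?_⟩
    have := congrArg norm h
    rw [EuclideanSpace.norm_single] at this
    simp at this
  by_contra h
  rw [Set.not_nonempty_iff_eq_empty] at h
  rcases isClopen_iff.mp (isClopen_iff_frontier_eq_empty.mpr h) with h' | h'
  · exact hne.ne_empty h'
  · rw [h'] at hbd
    exact NormedSpace.unbounded_univ ℝ _ hbd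

/-- Derivative computations for `w ε = exp (-p₀ b) + ε ‖·‖²`. -/
theorem w_props {n : ℕ} {Ω : Set (EuclideanSpace ℝ (Fin n))} (hΩo : IsOpen Ω)
    {b : EuclideanSpace ℝ (Fin n) → ℝ} (hb : ContDiffOn ℝ 2 b Ω)
    (p₀ ε : ℝ) {x : EuclideanSpace ℝ (Fin n)} (hx : x ∈ Ω) :
    (∀ᶠ y in 𝓝 x, DifferentiableAt ℝ (fun z => Real.exp (-p₀ * b z) + ε * ‖z‖ ^ 2) y) ∧
    (∀ i : Fin n, DifferentiableAt ℝ
      (fun y => fderiv ℝ (fun z => Real.exp (-p₀ * b z) + ε * ‖z‖ ^ 2) y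
        (EuclideanSpace.single i 1)) x) ∧
    lap (fun z => Real.exp (-p₀ * b z) + ε * ‖z‖ ^ 2) x =
      Real.exp (-p₀ * b x) * p₀ * (-(lap b x) + p₀ * ‖fderiv ℝ b x‖ ^ 2) + ε * (2 * n) := by
  set w : EuclideanSpace ℝ (Fin n) → ℝ := fun z => Real.exp (-p₀ * b z) + ε * ‖z‖ ^ 2 with hwdef
  set e : Fin n → EuclideanSpace ℝ (Fin n) := fun i => EuclideanSpace.single i 1 with hedef
  have hbd : ∀ y ∈ Ω, DifferentiableAt ℝ b y := fun y hy =>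
    ((hb.differentiableOn two_ne_zero) y hy).differentiableAt (hΩo.mem_nhds hy)
  have hDb1 : ContDiffOn ℝ 1 (fderiv ℝ b) Ω := hb.fderiv_of_isOpen hΩo (by norm_num)
  have hDb : ∀ y ∈ Ω, DifferentiableAt ℝ (fderiv ℝ b) y := fun y hy =>
    ((hDb1.differentiableOn one_ne_zero) y hy).differentiableAt (hΩo.mem_nhds hy)
  have hu : ∀ y ∈ Ω, HasFDerivAt (fun z => Real.exp (-p₀ * b z))
      (Real.exp (-p₀ * b y) • ((-p₀) • fderiv ℝ b y)) y := by
    intro y hy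
    have hc : HasFDerivAt (fun z => -p₀ * b z) ((-p₀) • fderiv ℝ b y) y :=
      (hbd y hy).hasFDerivAt.const_mul (-p₀)
    exact (Real.hasDerivAt_exp (-p₀ * b y)).comp_hasFDerivAt y hc
  have hq : ∀ y : EuclideanSpace ℝ (Fin n),
      HasFDerivAt (fun z : EuclideanSpace ℝ (Fin n) => ε * ‖z‖ ^ 2)
        (ε • ((2:ℕ) • innerSL ℝ y)) y := fun y =>
    ((hasStrictFDerivAt_norm_sq y).hasFDerivAt).const_mul ε
  have hwd : ∀ y ∈ Ω, HasFDerivAt w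
      (Real.exp (-p₀ * b y) • ((-p₀) • fderiv ℝ b y) + ε • ((2:ℕ) • innerSL ℝ y)) y :=
    fun y hy => (hu y hy).add (hq y)
  have hfw : ∀ y ∈ Ω, ∀ i, fderiv ℝ w y (e i)
      = Real.exp (-p₀ * b y) * (-p₀ * fderiv ℝ b y (e i)) + ε * (2 * y i) := by
    intro y hy i
    rw [(hwd y hy).fderiv]
    simp [hedef, EuclideanSpace.inner_single_right, star_trivial]
  have hfi : ∀ i, DifferentiableAt ℝ (fun z => fderiv ℝ b z (e i)) x :=
    fun i => (hDb x hx).clm_apply (differentiableAt_const _)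
  set D2 : Fin n → (EuclideanSpace ℝ (Fin n) →L[ℝ] ℝ) :=
    fun i => fderiv ℝ (fun z => fderiv ℝ b z (e i)) x with hD2def
  have hGd : ∀ i, HasFDerivAt
      (fun z => Real.exp (-p₀ * b z) * (-p₀ * fderiv ℝ b z (e i)) + ε * (2 * z i))
      (Real.exp (-p₀ * b x) • ((-p₀) • D2 i)
        + (-p₀ * fderiv ℝ b x (e i)) • (Real.exp (-p₀ * b x) • ((-p₀) • fderiv ℝ b x))
        + ε • ((2:ℝ) • (EuclideanSpace.proj i : EuclideanSpace ℝ (Fin n) →L[ℝ] ℝ))) x := by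
    intro i
    refine HasFDerivAt.add ?_ ?_
    · exact (hu x hx).mul ((hfi i).hasFDerivAt.const_mul (-p₀))
    · exact ((EuclideanSpace.proj (𝕜 := ℝ) i).hasFDerivAt.const_mul (2:ℝ)).const_mul ε
  have heq : ∀ i, (fun y => fderiv ℝ w y (e i)) =ᶠ[𝓝 x]
      (fun z => Real.exp (-p₀ * b z) * (-p₀ * fderiv ℝ b z (e i)) + ε * (2 * z i)) := by
    intro i
    filter_upwards [hΩo.mem_nhds hx] with y hy using hfw y hy i
  refine ⟨?_, ?_, ?_⟩
  · filter_upwards [hΩo.mem_nhds hx] with y hy using (hwd y hy).differentiableAt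
  · intro i
    exact (heq i).differentiableAt_iff.mpr (hGd i).differentiableAt
  · have hterm : ∀ i, fderiv ℝ (fun y => fderiv ℝ w y (e i)) x (e i)
        = (-p₀ * Real.exp (-p₀ * b x)) * (D2 i (e i))
          + (p₀ ^ 2 * Real.exp (-p₀ * b x)) * (fderiv ℝ b x (e i)) ^ 2 + ε * 2 := by
      intro i
      rw [(heq i).fderiv_eq, (hGd i).fderiv]
      simp [hedef, EuclideanSpace.single_apply]
      ring
    have hlapb : lap b x = ∑ i, D2 i (e i) := rfl
    have hns : ‖fderiv ℝ b x‖ ^ 2 = ∑ i, (fderiv ℝ b x (e i)) ^ 2 := norm_dual_sq _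
    show (∑ i : Fin n, fderiv ℝ (fun y => fderiv ℝ w y (e i)) x (e i)) = _
    rw [Finset.sum_congr rfl (fun i _ => hterm i), Finset.sum_add_distrib,
      Finset.sum_add_distrib, ← Finset.mul_sum, ← Finset.mul_sum, Finset.sum_const,
      Finset.card_univ, Fintype.card_fin, nsmul_eq_mul, ← hlapb, hlapb, ← hlapb]
    rw [hns]
    ring

theorem min_on_boundary_of_supersolution {n : ℕ} (hn : 1 ≤ n)
    (Ω : Set (EuclideanSpace ℝ (Fin n))) (hΩo : IsOpen Ω)
    (b : EuclideanSpace ℝ (Fin n) → ℝ) (hb : ContDiffOn ℝ 2 b Ω)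
    (p₀ : ℝ) (hp₀ : 0 < p₀)
    (hsuper : ∀ x ∈ Ω, 0 ≤ -lap b x + (p₀ / 2) * ‖fderiv ℝ b x‖ ^ 2)
    (Ω' : Set (EuclideanSpace ℝ (Fin n))) (hΩ'ne : Ω'.Nonempty) (hΩ'o : IsOpen Ω')
    (hΩ'bd : Bornology.IsBounded Ω') (hΩ'cl : closure Ω' ⊆ Ω) :
    sInf (b '' closure Ω') = sInf (b '' frontier Ω') := by
  set u : EuclideanSpace ℝ (Fin n) → ℝ := fun z => Real.exp (-p₀ * b z) with hudef
  have hbc : ContinuousOn b (closure Ω') := (hb.continuousOn).mono hΩ'cl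
  have huc : ContinuousOn u (closure Ω') :=
    Real.continuous_exp.comp_continuousOn (continuousOn_const.mul hbc)
  have hK : IsCompact (closure Ω') := hΩ'bd.isCompact_closure
  have hFsub : frontier Ω' ⊆ closure Ω' := frontier_subset_closure
  have hFc : IsCompact (frontier Ω') := hK.of_isClosed_subset isClosed_frontier hFsub
  have hFne : (frontier Ω').Nonempty := frontier_ne hn hΩ'ne hΩ'bd
  obtain ⟨z0, hz0F, hz0⟩ := hFc.exists_isMaxOn hFne (huc.mono hFsub)
  obtain ⟨C, hC⟩ := isBounded_iff_forall_norm_le.mp hΩ'bd.closure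
  have hC0 : 0 ≤ C := le_trans (norm_nonneg z0) (hC z0 (hFsub hz0F))
  -- main claim via the maximum principle and ε → 0
  have key : ∀ x ∈ closure Ω', u x ≤ u z0 := by
    intro x hx
    apply le_of_forall_pos_le_add
    intro η hη
    set ε := η / (C ^ 2 + 1) with hεdef
    have hεpos : 0 < ε := by positivity
    set wε : EuclideanSpace ℝ (Fin n) → ℝ := fun z => Real.exp (-p₀ * b z) + ε * ‖z‖ ^ 2
      with hwεdef
    have hsubΩ : Ω' ⊆ Ω := fun y hy => hΩ'cl (subset_closure hy)
    have hwc : ContinuousOn wε (closure Ω') :=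
      huc.add (continuousOn_const.mul ((continuous_norm.pow 2).continuousOn))
    obtain ⟨z, hzF, hz⟩ := frontier_max hΩ'ne hΩ'o hΩ'bd wε hwc
      (fun y hy => (w_props hΩo hb p₀ ε (hsubΩ hy)).1)
      (fun y hy => (w_props hΩo hb p₀ ε (hsubΩ hy)).2.1)
      (fun y hy => by
        rw [(w_props hΩo hb p₀ ε (hsubΩ hy)).2.2]
        have hs := hsuper y (hsubΩ hy)
        have h1 : 0 ≤ -(lap b y) + p₀ * ‖fderiv ℝ b y‖ ^ 2 := by
          nlinarith [sq_nonneg ‖fderiv ℝ b y‖, hp₀.le]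
        have h2 : 0 ≤ Real.exp (-p₀ * b y) * p₀ * (-(lap b y) + p₀ * ‖fderiv ℝ b y‖ ^ 2) :=
          mul_nonneg (mul_nonneg (Real.exp_nonneg _) hp₀.le) h1
        have hn' : (1:ℝ) ≤ n := by exact_mod_cast hn
        have h3 : 0 < ε * (2 * n) := mul_pos hεpos (by linarith)
        linarith)
    have h4 : u x ≤ wε x := by
      have : 0 ≤ ε * ‖x‖ ^ 2 := by positivity
      simp only [hwεdef, hudef]
      linarith
    have h5 : wε x ≤ wε z := hz x hx
    have h6 : wε z ≤ u z0 + ε * C ^ 2 := by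
      have hz0' : u z ≤ u z0 := hz0 hzF
      have hnz : ‖z‖ ≤ C := hC z (hFsub hzF)
      have : ε * ‖z‖ ^ 2 ≤ ε * C ^ 2 :=
        mul_le_mul_of_nonneg_left (by nlinarith [norm_nonneg z]) hεpos.le
      simp only [hwεdef, hudef] at *
      linarith
    have h7 : ε * C ^ 2 ≤ η := by
      rw [hεdef]
      rw [div_mul_eq_mul_div, div_le_iff₀ (by positivity)]
      nlinarith
    linarith
  -- translate to b
  have hbkey : ∀ x ∈ closure Ω', b z0 ≤ b x := by
    intro x hx
    have h1 := key x hx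
    simp only [hudef] at h1
    have h2 := Real.exp_le_exp.mp h1
    nlinarith
  have hKne := hΩ'ne.closure
  have hbKc : IsCompact (b '' closure Ω') := hK.image_of_continuousOn hbc
  have hbFc : IsCompact (b '' frontier Ω') := hFc.image_of_continuousOn (hbc.mono hFsub)
  apply le_antisymm
  · exact csInf_le_csInf hbKc.bddBelow (hFne.image b) (image_mono hFsub)
  · apply le_csInf (hKne.image b)
    rintro y ⟨x, hx, rfl⟩
    calc sInf (b '' frontier Ω') ≤ b z0 := csInf_le hbFc.bddBelow (mem_image_of_mem b hz0F)
    _ ≤ b x := hbkey x hx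
end

section
/- Let Ω be a nonempty bounded open subset of ℝⁿ and b : ℝⁿ → ℝ Lipschitz continuous. Suppose Ω' is a potential well of depth b₀ > 0, i.e. Ω' is a nonempty open subset of Ω with min_{cl(Ω')} b < min_{∂Ω'} b and b₀ := min_{∂Ω'} b − min_{cl(Ω')} b. Then for every ω ∈ (0, b₀) there exists a constant C > 0 such that λ₁(p) ≤ C e^{−ωp} for all p ≥ 0. -/
open MeasureTheory

/-- Variational principal eigenvalue of `-Δ + p∇b·∇` with Dirichlet boundary conditions on `Ω`:
infimum of the weighted Rayleigh quotient `I_{pb}` over nonzero Lipschitz functions vanishing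
outside `Ω`. -/
noncomputable def lam1drift {n : ℕ} (Ω : Set (EuclideanSpace ℝ (Fin n)))
    (b : EuclideanSpace ℝ (Fin n) → ℝ) (p : ℝ) : ℝ :=
  sInf { r | ∃ u : EuclideanSpace ℝ (Fin n) → ℝ, (∃ K, LipschitzWith K u) ∧
    (∀ x ∉ Ω, u x = 0) ∧ u ≠ 0 ∧
    r = (∫ x in Ω, Real.exp (-p * b x) * ‖fderiv ℝ u x‖ ^ 2) /
        (∫ x in Ω, Real.exp (-p * b x) * u x ^ 2) }

set_option maxHeartbeats 1000000

open Metric Set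

open MeasureTheory Metric Set

lemma aux_frontier_cross {X : Type*} [TopologicalSpace X] {s t : Set X}
    (hs : IsPreconnected s) (h1 : (s ∩ t).Nonempty) (h2 : (s \ t).Nonempty) :
    (s ∩ frontier t).Nonempty := by
  by_contra h
  rw [Set.not_nonempty_iff_eq_empty] at h
  have hsub : s ⊆ interior t ∪ (closure t)ᶜ := by
    intro x hx
    have hxf : x ∉ frontier t := fun hf => (Set.eq_empty_iff_forall_notMem.1 h x) ⟨hx, hf⟩
    by_cases hxc : x ∈ closure t
    · left
      by_contra hxi
      exact hxf ⟨hxc, hxi⟩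
    · right; exact hxc
  obtain ⟨a, has, hat⟩ := h1
  obtain ⟨c, hcs, hct⟩ := h2
  have ha : a ∈ interior t := by
    rcases hsub has with h' | h'
    · exact h'
    · exact absurd (subset_closure hat) h'
  have hc : c ∈ (closure t)ᶜ := by
    rcases hsub hcs with h' | h'
    · exact absurd (interior_subset h') hct
    · exact h'
  obtain ⟨z, _, hzu, hzv⟩ := hs (interior t) (closure t)ᶜ isOpen_interior
    isClosed_closure.isOpen_compl hsub ⟨a, has, ha⟩ ⟨c, hcs, hc⟩
  exact hzv (subset_closure (interior_subset hzu))

theorem exponential_decay_of_potential_well {n : ℕ} (hn : 1 ≤ n)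
    (Ω : Set (EuclideanSpace ℝ (Fin n)))
    (hΩne : Ω.Nonempty) (hΩo : IsOpen Ω) (hΩbd : Bornology.IsBounded Ω)
    (b : EuclideanSpace ℝ (Fin n) → ℝ) (K : NNReal) (hb : LipschitzWith K b)
    (Ω' : Set (EuclideanSpace ℝ (Fin n))) (hΩ'ne : Ω'.Nonempty) (hΩ'o : IsOpen Ω')
    (hΩ'sub : Ω' ⊆ Ω)
    (hwell : sInf (b '' closure Ω') < sInf (b '' frontier Ω'))
    (b₀ : ℝ) (hb₀ : b₀ = sInf (b '' frontier Ω') - sInf (b '' closure Ω'))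
    (ω : ℝ) (hω : ω ∈ Set.Ioo 0 b₀) :
    ∃ C > 0, ∀ p : ℝ, 0 ≤ p → lam1drift Ω b p ≤ C * Real.exp (-ω * p) := by
  obtain ⟨hω0, hωb⟩ := hω
  have hbc : Continuous b := hb.continuous
  -- compactness
  have hclcomp : IsCompact (closure Ω') := (hΩbd.subset hΩ'sub).isCompact_closure
  have hclne : (closure Ω').Nonempty := hΩ'ne.closure
  obtain ⟨x₀, hx₀cl, hx₀min⟩ := hclcomp.exists_isMinOn hclne hbc.continuousOn
  set m := sInf (b '' closure Ω') with hm
  set M := sInf (b '' frontier Ω') with hM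
  have hbx₀ : b x₀ = m := le_antisymm
    (le_csInf (hclne.image b) (by rintro y ⟨z, hz, rfl⟩; exact hx₀min hz))
    (csInf_le ((hclcomp.image hbc).bddBelow) ⟨x₀, hx₀cl, rfl⟩)
  have hfrcomp : IsCompact (frontier Ω') :=
    hclcomp.of_isClosed_subset isClosed_frontier frontier_subset_closure
  have hfrb : ∀ z ∈ frontier Ω', M ≤ b z := fun z hz =>
    csInf_le ((hfrcomp.image hbc).bddBelow) ⟨z, hz, rfl⟩
  clear_value m M
  -- constants
  set ω' : ℝ := (ω + b₀) / 2 with hω'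
  have hω'ω : ω < ω' := by simp only [hω']; linarith
  have hω'b : ω' < b₀ := by simp only [hω']; linarith
  have hω'0 : 0 < ω' := lt_trans hω0 hω'ω
  clear_value ω'
  set θ : ℝ := m + ω' with hθ
  have hθM : θ < M := by simp only [hθ]; linarith [hb₀]
  clear_value θ
  -- x₀ ∈ Ω'
  have hclfr : closure Ω' ⊆ Ω' ∪ frontier Ω' := by
    intro x hx
    by_cases hxΩ : x ∈ Ω'
    · exact Or.inl hxΩ
    · exact Or.inr ⟨hx, by rwa [hΩ'o.interior_eq]⟩
  have hx₀Ω' : x₀ ∈ Ω' := by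
    rcases hclfr hx₀cl with h | h
    · exact h
    · exact absurd (hfrb x₀ h) (by rw [hbx₀]; exact not_le.2 hwell)
  -- the well U
  set U : Set (EuclideanSpace ℝ (Fin n)) := Ω' ∩ {x | b x < θ} with hU
  have hUo : IsOpen U := hΩ'o.inter (isOpen_lt hbc continuous_const)
  have hx₀U : x₀ ∈ U := ⟨hx₀Ω', by simp only [mem_setOf_eq, hbx₀, hθ]; linarith⟩
  have hUsub : U ⊆ Ω' := inter_subset_left
  have hclU : closure U ⊆ Ω' := by
    intro x hx
    have hbx : b x ≤ θ := by
      have : closure U ⊆ {y | b y ≤ θ} :=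
        closure_minimal (fun y hy => (le_of_lt hy.2 : b y ≤ θ)) (isClosed_le hbc continuous_const)
      exact this hx
    rcases hclfr (closure_mono hUsub hx) with h | h
    · exact h
    · exact absurd (hfrb x h) (not_le.2 (lt_of_le_of_lt hbx hθM))
  -- Lipschitz bound for b
  set Kb : ℝ := (K : ℝ) + 1 with hKbdef
  have hKb0 : 0 < Kb := by positivity
  have hbK : ∀ x y, b x ≤ b y + Kb * dist x y := by
    intro x y
    have h1 := hb.dist_le_mul x y
    rw [Real.dist_eq] at h1
    have h2 : b x - b y ≤ (K : ℝ) * dist x y := (le_abs_self _).trans h1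
    simp only [hKbdef]
    nlinarith [dist_nonneg (x := x) (y := y)]
  clear_value Kb
  -- Uᶜ nonempty
  haveI : Nonempty (Fin n) := ⟨⟨0, hn⟩⟩
  haveI : Nontrivial (EuclideanSpace ℝ (Fin n)) :=
    inferInstance
  have hUc_ne : Uᶜ.Nonempty := by
    rw [Set.nonempty_compl]
    intro h
    have hΩuniv : Ω = Set.univ := eq_univ_of_univ_subset (h ▸ (hUsub.trans hΩ'sub))
    exact NormedSpace.unbounded_univ ℝ (EuclideanSpace ℝ (Fin n)) (hΩuniv ▸ hΩbd)
  have hUc_closed : IsClosed Uᶜ := hUo.isClosed_compl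
  set r : ℝ := infDist x₀ Uᶜ with hrdef
  have hr : 0 < r := (hUc_closed.notMem_iff_infDist_pos hUc_ne).1 (by simp [hx₀U])
  clear_value r
  set ε' : ℝ := ω' - ω with hε'def
  have hε' : 0 < ε' := by simp only [hε'def]; linarith
  clear_value ε'
  set δ : ℝ := min (r / 2) (ε' / (6 * Kb)) with hδdef
  have hδ0 : 0 < δ := lt_min (by linarith) (div_pos hε' (by linarith))
  have hδr : δ ≤ r / 2 := min_le_left _ _
  have hδε : 2 * Kb * δ ≤ ε' / 3 := by
    have h1 : δ * (6 * Kb) ≤ ε' := (le_div_iff₀ (by linarith)).1 (min_le_right _ _)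
    linarith
  clear_value δ
  set ρ : ℝ := min (r / 2) (ε' / (3 * Kb)) with hρdef
  have hρ0 : 0 < ρ := lt_min (by linarith) (div_pos hε' (by linarith))
  have hρr : ρ ≤ r / 2 := min_le_left _ _
  have hρε : Kb * ρ ≤ ε' / 3 := by
    have h1 : ρ * (3 * Kb) ≤ ε' := (le_div_iff₀ (by linarith)).1 (min_le_right _ _)
    linarith
  clear_value ρ
  -- the test function
  set u : EuclideanSpace ℝ (Fin n) → ℝ := fun x => min 1 (δ⁻¹ * infDist x Uᶜ) with hudef
  have hLip1 : LipschitzWith 1 (fun x : EuclideanSpace ℝ (Fin n) => infDist x Uᶜ) :=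
    lipschitz_infDist_pt Uᶜ
  have hLip2 : LipschitzWith (‖δ⁻¹‖₊ * 1)
      (fun x : EuclideanSpace ℝ (Fin n) => δ⁻¹ * infDist x Uᶜ) :=
    (lipschitzWith_smul (β := ℝ) δ⁻¹).comp hLip1
  have hLipu : LipschitzWith (‖δ⁻¹‖₊ * 1) u := hLip2.const_min 1
  clear_value u
  have hfd : ∀ x, ‖fderiv ℝ u x‖ ≤ δ⁻¹ := by
    intro x
    refine (norm_fderiv_le_of_lipschitz ℝ hLipu).trans (le_of_eq ?_)
    rw [NNReal.coe_mul, NNReal.coe_one, mul_one, coe_nnnorm, Real.norm_eq_abs,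
      abs_of_pos (inv_pos.2 hδ0)]
  have hu_eq0 : ∀ x ∈ Uᶜ, u x = 0 := by
    intro x hx
    simp only [hudef, infDist_zero_of_mem hx, mul_zero]
    simp
  have hu_out : ∀ x ∉ Ω, u x = 0 := fun x hx =>
    hu_eq0 x (fun hxU => hx (hΩ'sub (hUsub hxU)))
  have hball_dist : ∀ x ∈ ball x₀ ρ, δ ≤ infDist x Uᶜ := by
    intro x hx
    have h1 : infDist x₀ Uᶜ ≤ infDist x Uᶜ + dist x₀ x := infDist_le_infDist_add_dist
    have h2 : dist x₀ x < ρ := by rw [dist_comm]; exact mem_ball.1 hx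
    linarith
  have hu_one : ∀ x ∈ ball x₀ ρ, u x = 1 := by
    intro x hx
    have h1 : 1 ≤ δ⁻¹ * infDist x Uᶜ := by
      have h2 := mul_le_mul_of_nonneg_left (hball_dist x hx) (le_of_lt (inv_pos.2 hδ0))
      rwa [inv_mul_cancel₀ (ne_of_gt hδ0)] at h2
    rw [hudef]
    exact min_eq_left h1
  have hball_sub : ball x₀ ρ ⊆ U := by
    intro x hx
    by_contra hxU
    have h1 := hball_dist x hx
    have hxc : x ∈ Uᶜ := hxU
    rw [infDist_zero_of_mem hxc] at h1
    linarith
  have hball_b : ∀ x ∈ ball x₀ ρ, b x ≤ m + Kb * ρ := by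
    intro x hx
    have h1 := hbK x x₀
    have h2 : dist x x₀ < ρ := mem_ball.1 hx
    nlinarith
  set β : ℝ := θ - 2 * Kb * δ with hβdef
  set α : ℝ := m + Kb * ρ with hαdef
  clear_value β α
  have hβα : ω ≤ β - α := by
    simp only [hβdef, hαdef, hθ]
    linarith [hδε, hρε, hε'def.le, hε'def.ge, hω'ω]
  -- locally constant implies zero derivative
  have hconst : ∀ (x : EuclideanSpace ℝ (Fin n)) (c : ℝ) (s : Set (EuclideanSpace ℝ (Fin n))),
      IsOpen s → x ∈ s → (∀ y ∈ s, u y = c) → fderiv ℝ u x = 0 := by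
    intro x c s hs hx hc
    have heq : u =ᶠ[nhds x] fun _ => c := Filter.eventuallyEq_of_mem (hs.mem_nhds hx) hc
    rw [heq.fderiv_eq, fderiv_const_apply]
  have hkey : ∀ x, fderiv ℝ u x ≠ 0 → β ≤ b x := by
    intro x hx
    have h1 : infDist x Uᶜ ≤ δ := by
      by_contra h
      push_neg at h
      refine hx (hconst x 1 {y | δ < infDist y Uᶜ}
        (isOpen_lt continuous_const (continuous_infDist_pt Uᶜ)) h ?_)
      intro y hy
      have h2 : 1 ≤ δ⁻¹ * infDist y Uᶜ := by
        have h3 := mul_le_mul_of_nonneg_left (le_of_lt hy) (le_of_lt (inv_pos.2 hδ0))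
        rwa [inv_mul_cancel₀ (ne_of_gt hδ0)] at h3
      rw [hudef]
      exact min_eq_left h2
    have h2 : x ∈ closure U := by
      by_contra h
      refine hx (hconst x 0 (closure U)ᶜ isClosed_closure.isOpen_compl h ?_)
      intro y hy
      exact hu_eq0 y (fun hyU => hy (subset_closure hyU))
    have hxΩ' : x ∈ Ω' := hclU h2
    have h3 : infDist x Uᶜ < 2 * δ := lt_of_le_of_lt h1 (by linarith)
    obtain ⟨y, hyUc, hyd⟩ := (infDist_lt_iff hUc_ne).1 h3
    by_cases hyΩ' : y ∈ Ω'
    · have hyb : θ ≤ b y := by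
        by_contra h
        push_neg at h
        exact hyUc ⟨hyΩ', h⟩
      have h4 := hbK y x
      have h5 : dist y x < 2 * δ := by rwa [dist_comm]
      simp only [hβdef]
      nlinarith
    · obtain ⟨z, hzseg, hzfr⟩ := aux_frontier_cross (convex_segment x y).isPreconnected
        ⟨x, left_mem_segment ℝ x y, hxΩ'⟩ ⟨y, right_mem_segment ℝ x y, hyΩ'⟩
      have hdz : dist x z ≤ dist x y := by
        have h4 := dist_add_dist_of_mem_segment hzseg
        linarith [dist_nonneg (x := z) (y := y)]
      have hbz : θ ≤ b z := le_trans hθM.le (hfrb z hzfr)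
      have h4 := hbK z x
      have h5 : dist z x < 2 * δ := by rw [dist_comm]; linarith
      simp only [hβdef]
      nlinarith
  -- integral estimates
  have hcontu : Continuous u := hLipu.continuous
  have hΩmeas : MeasurableSet Ω := hΩo.measurableSet
  have hΩfin : volume Ω < ⊤ := hΩbd.measure_lt_top
  have hV0 : 0 < (volume Ω).toReal :=
    ENNReal.toReal_pos (hΩo.measure_pos volume hΩne).ne' hΩfin.ne
  have hballΩ : ball x₀ ρ ⊆ Ω := hball_sub.trans (hUsub.trans hΩ'sub)
  have hvfin : volume (ball x₀ ρ) < ⊤ := measure_ball_lt_top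
  have hv0 : 0 < (volume (ball x₀ ρ)).toReal :=
    ENNReal.toReal_pos (measure_ball_pos volume x₀ hρ0).ne' hvfin.ne
  have hu_ne : u ≠ 0 := by
    intro h
    have h1 := hu_one x₀ (mem_ball_self hρ0)
    rw [h] at h1
    simpa using h1
  set C : ℝ := (δ⁻¹ ^ 2 * (volume Ω).toReal) / (volume (ball x₀ ρ)).toReal with hCdef
  have hC0 : 0 < C := div_pos (mul_pos (pow_pos (inv_pos.2 hδ0) 2) hV0) hv0
  refine ⟨C, hC0, ?_⟩
  intro p hp
  set N : ℝ := ∫ x in Ω, Real.exp (-p * b x) * ‖fderiv ℝ u x‖ ^ 2 with hNdef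
  set D : ℝ := ∫ x in Ω, Real.exp (-p * b x) * u x ^ 2 with hDdef
  have hNbound : N ≤ Real.exp (-p * β) * δ⁻¹ ^ 2 * (volume Ω).toReal := by
    have hb1 : ∀ x ∈ Ω,
        ‖Real.exp (-p * b x) * ‖fderiv ℝ u x‖ ^ 2‖ ≤ Real.exp (-p * β) * δ⁻¹ ^ 2 := by
      intro x _
      rw [Real.norm_eq_abs, abs_of_nonneg (by positivity)]
      by_cases hfx : fderiv ℝ u x = 0
      · rw [hfx]
        simp only [norm_zero, ne_eq, OfNat.ofNat_ne_zero, not_false_eq_true, zero_pow, mul_zero]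
        positivity
      · have h2 : Real.exp (-p * b x) ≤ Real.exp (-p * β) := by
          apply Real.exp_le_exp.2
          nlinarith [mul_nonneg hp (sub_nonneg.2 (hkey x hfx))]
        have h3 : ‖fderiv ℝ u x‖ ^ 2 ≤ δ⁻¹ ^ 2 :=
          pow_le_pow_left₀ (norm_nonneg _) (hfd x) 2
        exact mul_le_mul h2 h3 (by positivity) (Real.exp_pos _).le
    calc N ≤ ‖N‖ := le_abs_self N
    _ ≤ (Real.exp (-p * β) * δ⁻¹ ^ 2) * (volume Ω).toReal :=
        norm_setIntegral_le_of_norm_le_const hΩfin hb1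
    _ = _ := by ring
  have hcont : Continuous (fun x => Real.exp (-p * b x) * u x ^ 2) :=
    (Real.continuous_exp.comp ((continuous_const (y := -p)).mul hbc)).mul (hcontu.pow 2)
  have hInt : IntegrableOn (fun x => Real.exp (-p * b x) * u x ^ 2) Ω volume :=
    (hcont.locallyIntegrable.integrableOn_isCompact hΩbd.isCompact_closure).mono_set
      subset_closure
  have hD1 : (∫ x in ball x₀ ρ, Real.exp (-p * b x) * u x ^ 2) ≤ D :=
    setIntegral_mono_set hInt (Filter.Eventually.of_forall fun x => by positivity)
      (HasSubset.Subset.eventuallyLE hballΩ)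
  have hD2 : Real.exp (-p * α) * (volume (ball x₀ ρ)).toReal
      ≤ ∫ x in ball x₀ ρ, Real.exp (-p * b x) * u x ^ 2 := by
    have h1 : (∫ _x in ball x₀ ρ, Real.exp (-p * α))
        ≤ ∫ x in ball x₀ ρ, Real.exp (-p * b x) * u x ^ 2 := by
      refine setIntegral_mono_on (integrableOn_const hvfin.ne) (hInt.mono_set hballΩ)
        measurableSet_ball ?_
      intro x hx
      rw [hu_one x hx, one_pow, mul_one]
      apply Real.exp_le_exp.2
      nlinarith [mul_nonneg hp (sub_nonneg.2 (hball_b x hx))]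
    rwa [setIntegral_const, smul_eq_mul, mul_comm] at h1
  have hDlow : Real.exp (-p * α) * (volume (ball x₀ ρ)).toReal ≤ D := hD2.trans hD1
  have hDpos : 0 < Real.exp (-p * α) * (volume (ball x₀ ρ)).toReal :=
    mul_pos (Real.exp_pos _) hv0
  have hbdd : BddBelow { q : ℝ | ∃ w : EuclideanSpace ℝ (Fin n) → ℝ,
      (∃ Kw, LipschitzWith Kw w) ∧ (∀ x ∉ Ω, w x = 0) ∧ w ≠ 0 ∧
      q = (∫ x in Ω, Real.exp (-p * b x) * ‖fderiv ℝ w x‖ ^ 2) /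
          (∫ x in Ω, Real.exp (-p * b x) * w x ^ 2) } := by
    refine ⟨0, ?_⟩
    rintro q ⟨w, _, _, _, rfl⟩
    exact div_nonneg (integral_nonneg fun x => by positivity)
      (integral_nonneg fun x => by positivity)
  have hlam : lam1drift Ω b p ≤ N / D :=
    csInf_le hbdd ⟨u, ⟨_, hLipu⟩, hu_out, hu_ne, rfl⟩
  have h1 : N / D ≤ (Real.exp (-p * β) * δ⁻¹ ^ 2 * (volume Ω).toReal) /
      (Real.exp (-p * α) * (volume (ball x₀ ρ)).toReal) :=
    div_le_div₀ (by positivity) hNbound hDpos hDlow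
  have h2 : (Real.exp (-p * β) * δ⁻¹ ^ 2 * (volume Ω).toReal) /
      (Real.exp (-p * α) * (volume (ball x₀ ρ)).toReal)
      = C * (Real.exp (-p * β) / Real.exp (-p * α)) := by
    rw [hCdef]
    field_simp
  have h3 : Real.exp (-p * β) / Real.exp (-p * α) ≤ Real.exp (-ω * p) := by
    rw [← Real.exp_sub]
    apply Real.exp_le_exp.2
    nlinarith [mul_nonneg hp (sub_nonneg.2 (le_trans (le_refl ω) hβα))]
  calc lam1drift Ω b p ≤ N / D := hlam
  _ ≤ (Real.exp (-p * β) * δ⁻¹ ^ 2 * (volume Ω).toReal) /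
      (Real.exp (-p * α) * (volume (ball x₀ ρ)).toReal) := h1
  _ = C * (Real.exp (-p * β) / Real.exp (-p * α)) := h2
  _ ≤ C * Real.exp (-ω * p) := mul_le_mul_of_nonneg_left h3 hC0.le
end

section
/- Let l > 0 and let b : [−l, l] → ℝ be Lipschitz continuous and even. Set b₁ := min_{[0,l]} b, b₂ := max_{[0,l]} b, B₁ := {x ∈ [0,l] : b(x) = b₁}, B₂ := {x ∈ [0,l] : b(x) = b₂}, and assume max B₁ < min B₂. Then λ₁(p) · (∫₀ˡ e^{−p b(x)} dx) · (∫₀ˡ e^{p b(y)} dy) → 1 as p → ∞; that is, λ₁(p) is asymptotically equivalent to (∫₀ˡ e^{−pb} dx)⁻¹ (∫₀ˡ e^{pb} dy)⁻¹. -/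
open MeasureTheory intervalIntegral Filter

set_option maxHeartbeats 1000000


private lemma seq_quot_tendsto {h : ℕ → ℝ} (hpos : ∀ n, 0 < h n)
    (h0 : Tendsto h atTop (nhds 0)) {f : ℝ → ℝ} {d y : ℝ} (hf : HasDerivAt f d y) :
    Tendsto (fun n => (f (y + h n) - f y) / h n) atTop (nhds d) := by
  have h1 : Tendsto (slope f y) (nhdsWithin y {y}ᶜ) (nhds d) :=
    hasDerivAt_iff_tendsto_slope.1 hf
  have h2 : Tendsto (fun n => y + h n) atTop (nhdsWithin y {y}ᶜ) := by
    apply tendsto_nhdsWithin_of_tendsto_nhds_of_eventually_within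
    · have : Tendsto (fun n => y + h n) atTop (nhds (y + 0)) :=
        tendsto_const_nhds.add h0
      simpa using this
    · filter_upwards with n
      simp only [Set.mem_compl_iff, Set.mem_singleton_iff]
      have := hpos n; intro hc; nlinarith [hc]
  have h3 := h1.comp h2
  refine h3.congr fun n => ?_
  simp [Function.comp, slope_def_field]

lemma lipschitz_ftc {u : ℝ → ℝ} {K : NNReal} (hu : LipschitzWith K u) (a b : ℝ) :
    (∫ x in a..b, deriv u x) = u b - u a := by
  have hcont : Continuous u := hu.continuous
  set h : ℕ → ℝ := fun n => ((n : ℝ) + 1)⁻¹ with hh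
  have hpos : ∀ n, 0 < h n := fun n => by positivity
  have h0 : Tendsto h atTop (nhds 0) := by
    apply Tendsto.comp tendsto_inv_atTop_zero
    exact tendsto_atTop_add_const_right _ 1 tendsto_natCast_atTop_atTop
  set F : ℕ → ℝ → ℝ := fun n x => (u (x + h n) - u x) / h n with hF
  set G : ℝ → ℝ := fun y => ∫ t in a..y, u t with hG
  have hGd : ∀ y : ℝ, HasDerivAt G (u y) y := fun y =>
    (hcont.integral_hasStrictDerivAt a y).hasDerivAt
  -- limit of the integrals of F n
  have key1 : ∀ n, (∫ x in a..b, F n x) = ((G (b + h n) - G b) - (G (a + h n) - G a)) / h n := by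
    intro n
    have hint : ∀ c d : ℝ, IntervalIntegrable u volume c d := fun c d =>
      hcont.intervalIntegrable c d
    have e1 : (∫ x in a..b, u (x + h n)) = ∫ x in (a + h n)..(b + h n), u x :=
      integral_comp_add_right u (h n)
    have e2 : (∫ x in a..b, (u (x + h n) - u x)) =
        (∫ x in a..b, u (x + h n)) - ∫ x in a..b, u x :=
      integral_sub ((hcont.comp (continuous_id.add continuous_const)).intervalIntegrable a b)
        (hint a b)
    have e3 : G (b + h n) = G (a + h n) + ∫ x in (a + h n)..(b + h n), u x :=
      (integral_add_adjacent_intervals (hint a (a + h n)) (hint (a + h n) (b + h n))).symm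
    have e4 : G a = 0 := integral_same
    have : (∫ x in a..b, F n x) = (∫ x in a..b, (u (x + h n) - u x)) / h n := by
      simp only [hF, intervalIntegral.integral_div]
    have hGb : G b = ∫ x in a..b, u x := rfl
    rw [this, e2, e1, e3, e4, ← hGb]
    ring
  have lim1 : Tendsto (fun n => ∫ x in a..b, F n x) atTop (nhds (u b - u a)) := by
    have tb := seq_quot_tendsto hpos h0 (hGd b)
    have ta := seq_quot_tendsto hpos h0 (hGd a)
    have := (tb.sub ta)
    have heq : (fun n => (G (b + h n) - G b) / h n - (G (a + h n) - G a) / h n) =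
        fun n => ((G (b + h n) - G b) - (G (a + h n) - G a)) / h n := by
      funext n; ring
    rw [heq] at this
    simpa [key1] using this
  -- dominated convergence
  have lim2 : Tendsto (fun n => ∫ x in a..b, F n x) atTop (nhds (∫ x in a..b, deriv u x)) := by
    apply intervalIntegral.tendsto_integral_filter_of_dominated_convergence (fun _ => (K : ℝ))
    · filter_upwards with n
      exact ((hcont.comp (continuous_id.add continuous_const)).sub hcont).div_const
        (h n) |>.aestronglyMeasurable
    · filter_upwards with n
      filter_upwards with x _
      have hb := hu.dist_le_mul (x + h n) x
      rw [Real.dist_eq, Real.dist_eq] at hb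
      simp only [add_sub_cancel_left] at hb
      rw [Real.norm_eq_abs, abs_div, abs_of_pos (hpos n), div_le_iff₀ (hpos n)]
      calc |u (x + h n) - u x| ≤ K * |h n| := hb
        _ = K * h n := by rw [abs_of_pos (hpos n)]
    · exact intervalIntegrable_const
    · filter_upwards [hu.ae_differentiableAt_real] with x hx _
      exact seq_quot_tendsto hpos h0 hx.hasDerivAt
  exact tendsto_nhds_unique lim2 lim1


lemma integral_cauchy_schwarz {f g : ℝ → ℝ} {a b : ℝ} (hab : a ≤ b)
    (hf2 : IntervalIntegrable (fun x => f x ^ 2) volume a b)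
    (hg2 : IntervalIntegrable (fun x => g x ^ 2) volume a b)
    (hfg : IntervalIntegrable (fun x => f x * g x) volume a b) :
    (∫ x in a..b, f x * g x) ^ 2 ≤ (∫ x in a..b, f x ^ 2) * ∫ x in a..b, g x ^ 2 := by
  set A := ∫ x in a..b, f x ^ 2 with hA'
  set B := ∫ x in a..b, g x ^ 2 with hB'
  set C := ∫ x in a..b, f x * g x with hC'
  have key : ∀ t : ℝ, 0 ≤ A * (t * t) + 2 * C * t + B := by
    intro t
    have h1 : (∫ x in a..b, (t * f x + g x) ^ 2) = A * t ^ 2 + 2 * C * t + B := by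
      have he : ∀ x : ℝ, (t * f x + g x) ^ 2 =
          t ^ 2 * f x ^ 2 + (2 * t) * (f x * g x) + g x ^ 2 := fun x => by ring
      rw [intervalIntegral.integral_congr (g := fun x =>
        t ^ 2 * f x ^ 2 + (2 * t) * (f x * g x) + g x ^ 2) (fun x _ => he x)]
      rw [intervalIntegral.integral_add ((hf2.const_mul _).add (hfg.const_mul _)) hg2,
        intervalIntegral.integral_add (hf2.const_mul _) (hfg.const_mul _),
        intervalIntegral.integral_const_mul, intervalIntegral.integral_const_mul]
      ring
    have := intervalIntegral.integral_nonneg (μ := volume)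
      (f := fun x => (t * f x + g x) ^ 2) hab fun x _ => sq_nonneg _
    rw [h1] at this; nlinarith [this]
  have hd := discrim_le_zero (a := A) (b := 2 * C) (c := B) key
  rw [discrim] at hd
  nlinarith [hd]

lemma intervalIntegrable_mul_bounded {φ ψ : ℝ → ℝ} {A B a b : ℝ}
    (hφ : ContinuousOn φ (Set.Icc A B)) (hψ : Measurable ψ) {M : ℝ}
    (hM : ∀ x, |ψ x| ≤ M) (hsub : Set.uIcc a b ⊆ Set.Icc A B) :
    IntervalIntegrable (fun x => φ x * ψ x) volume a b := by
  have hI : Set.uIoc a b ⊆ Set.Icc A B := Set.uIoc_subset_uIcc.trans hsub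
  rw [intervalIntegrable_iff]
  constructor
  · exact ((hφ.mono hI).aestronglyMeasurable measurableSet_uIoc).mul
      hψ.aestronglyMeasurable.restrict
  · obtain ⟨Cb, hCb⟩ := (isCompact_Icc (a := A) (b := B)).exists_bound_of_continuousOn hφ
    have hCb0 : 0 ≤ max Cb 0 := le_max_right _ _
    apply HasFiniteIntegral.restrict_of_bounded (C := max Cb 0 * max M 0)
      measure_Ioc_lt_top
    filter_upwards [ae_restrict_mem measurableSet_uIoc] with x hx
    have h1 : ‖φ x‖ ≤ max Cb 0 := le_trans (hCb x (hI hx)) (le_max_left _ _)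
    have h2 : |ψ x| ≤ max M 0 := le_trans (hM x) (le_max_left _ _)
    rw [norm_mul]
    exact mul_le_mul h1 h2 (abs_nonneg _) hCb0


lemma even_int {l c : ℝ} (hc0 : 0 ≤ c) (hcl : c ≤ l) {f : ℝ → ℝ}
    (hf : ∀ x ∈ Set.Icc (-l) l, f (-x) = f x) :
    (∫ x in (-c)..(0:ℝ), f x) = ∫ x in (0:ℝ)..c, f x := by
  have h1 := intervalIntegral.integral_comp_neg (a := (0:ℝ)) (b := c) f
  rw [neg_zero] at h1
  rw [← h1]
  apply intervalIntegral.integral_congr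
  intro x hx
  rw [Set.uIcc_of_le hc0] at hx
  exact hf x ⟨by linarith [hx.1, hc0.trans hcl], hx.2.trans hcl⟩

lemma lower_bound (l : ℝ) (hl : 0 < l) (b : ℝ → ℝ) (K : NNReal)
    (hb : LipschitzOnWith K b (Set.Icc (-l) l))
    (hbeven : ∀ x ∈ Set.Icc (-l) l, b (-x) = b x) (p : ℝ)
    (u : ℝ → ℝ) (huL : ∃ K₀, LipschitzWith K₀ u) (hum : u (-l) = 0) (hup : u l = 0)
    (hux : ∃ x ∈ Set.Icc (-l) l, u x ≠ 0) :
    ((∫ x in (0:ℝ)..l, Real.exp (-p * b x)) * (∫ y in (0:ℝ)..l, Real.exp (p * b y)))⁻¹ ≤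
      (∫ x in (-l)..l, Real.exp (-p * b x) * deriv u x ^ 2) /
        (∫ x in (-l)..l, Real.exp (-p * b x) * u x ^ 2) := by
  obtain ⟨K₀, hK₀⟩ := huL
  set ρ : ℝ → ℝ := fun x => Real.exp (-p * b x) with hρ
  set σ : ℝ → ℝ := fun x => Real.exp (p * b x) with hσ
  have hbc : ContinuousOn b (Set.Icc (-l) l) := hb.continuousOn
  have hρc : ContinuousOn ρ (Set.Icc (-l) l) :=
    Real.continuous_exp.comp_continuousOn (continuousOn_const.mul hbc)
  have hσc : ContinuousOn σ (Set.Icc (-l) l) :=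
    Real.continuous_exp.comp_continuousOn (continuousOn_const.mul hbc)
  have huc : Continuous u := hK₀.continuous
  have hdm : Measurable (deriv u) := measurable_deriv u
  have hdb : ∀ x, |deriv u x| ≤ (K₀ : ℝ) := fun x => by
    have := norm_deriv_le_of_lipschitz (x₀ := x) hK₀; rwa [Real.norm_eq_abs] at this
  -- integrability of ρ * (deriv u)^2 on subintervals
  have hIw : ∀ a' b' : ℝ, Set.uIcc a' b' ⊆ Set.Icc (-l) l →
      IntervalIntegrable (fun x => ρ x * deriv u x ^ 2) volume a' b' := by
    intro a' b' hs
    exact intervalIntegrable_mul_bounded hρc (hdm.pow_const 2)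
      (M := (K₀ : ℝ) ^ 2) (fun x => by
        rw [abs_pow]
        exact pow_le_pow_left₀ (abs_nonneg _) (hdb x) 2) hs
  -- integrability of deriv u on subintervals
  have hId : ∀ a' b' : ℝ, IntervalIntegrable (fun x => deriv u x) volume a' b' := by
    intro a' b'
    have := intervalIntegrable_mul_bounded (A := a' ⊓ b') (B := a' ⊔ b')
      (φ := fun _ => (1:ℝ)) continuousOn_const hdm (M := (K₀:ℝ)) hdb
      (by rw [Set.uIcc])
    simpa using this
  have hsub : ∀ a' b' : ℝ, -l ≤ a' → b' ≤ l → a' ≤ b' → Set.uIcc a' b' ⊆ Set.Icc (-l) l :=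
    fun a' b' h1 h2 h3 => by rw [Set.uIcc_of_le h3]; exact Set.Icc_subset_Icc h1 h2
  set A := ∫ x in (0:ℝ)..l, ρ x with hA'
  set B := ∫ y in (0:ℝ)..l, σ y with hB'
  set N := ∫ x in (-l)..l, ρ x * deriv u x ^ 2 with hN'
  set D := ∫ x in (-l)..l, ρ x * u x ^ 2 with hD'
  show (A * B)⁻¹ ≤ N / D
  have hll : -l ≤ l := by linarith
  have hl0 : -l ≤ (0:ℝ) := by linarith
  have hApos : 0 < A :=
    intervalIntegral_pos_of_pos_on ((hρc.mono (hsub 0 l hl0 le_rfl hl.le)).intervalIntegrable)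
      (fun x _ => Real.exp_pos _) hl
  have hBpos : 0 < B :=
    intervalIntegral_pos_of_pos_on ((hσc.mono (hsub 0 l hl0 le_rfl hl.le)).intervalIntegrable)
      (fun x _ => Real.exp_pos _) hl
  -- positivity of D
  have hDpos : 0 < D := by
    obtain ⟨x₀, hx₀, hx₀ne⟩ := hux
    have hx₀o : x₀ ∈ Set.Ioo (-l) l := by
      refine ⟨lt_of_le_of_ne hx₀.1 ?_, lt_of_le_of_ne hx₀.2 ?_⟩
      · intro h; exact hx₀ne (by rw [← h, hum])
      · intro h; exact hx₀ne (by rw [h, hup])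
    have hW : IsOpen (Set.Ioo (-l) l ∩ u ⁻¹' {(0:ℝ)}ᶜ) :=
      isOpen_Ioo.inter (isOpen_compl_singleton.preimage huc)
    have hWsub : Set.Ioo (-l) l ∩ u ⁻¹' {(0:ℝ)}ᶜ ⊆
        Function.support (fun x => ρ x * u x ^ 2) ∩ Set.Ioc (-l) l := by
      rintro x ⟨hxo, hxu⟩
      refine ⟨?_, hxo.1, hxo.2.le⟩
      simp only [Function.mem_support]
      exact mul_ne_zero (Real.exp_ne_zero _) (pow_ne_zero 2 hxu)
    have hvol : 0 < volume (Function.support (fun x => ρ x * u x ^ 2) ∩ Set.Ioc (-l) l) :=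
      lt_of_lt_of_le (hW.measure_pos volume ⟨x₀, hx₀o, hx₀ne⟩) (measure_mono hWsub)
    have hint : IntegrableOn (fun x => ρ x * u x ^ 2) (Set.Ioc (-l) l) volume := by
      have h2 : IntervalIntegrable (fun x => ρ x * u x ^ 2) volume (-l) l :=
        ((hρc.mono (hsub (-l) l le_rfl le_rfl hll)).mul
          ((huc.pow 2).continuousOn)).intervalIntegrable
      exact (intervalIntegrable_iff_integrableOn_Ioc_of_le hll).1 h2
    have := (MeasureTheory.setIntegral_pos_iff_support_of_nonneg_ae
      (Filter.Eventually.of_forall fun x => by positivity) hint).2 hvol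
    rwa [hD', intervalIntegral.integral_of_le hll]
  -- even symmetry of A and B
  have hAeven : (∫ x in (-l)..(0:ℝ), ρ x) = A := by
    refine even_int hl.le le_rfl fun x hx => ?_
    simp only [hρ]; rw [hbeven x hx]
  have hBeven : (∫ x in (-l)..(0:ℝ), σ x) = B := by
    refine even_int hl.le le_rfl fun x hx => ?_
    simp only [hσ]; rw [hbeven x hx]
  -- pieces of N
  set Np := ∫ x in (0:ℝ)..l, ρ x * deriv u x ^ 2 with hNp'
  set Nm := ∫ x in (-l)..(0:ℝ), ρ x * deriv u x ^ 2 with hNm'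
  have hNp0 : 0 ≤ Np := intervalIntegral.integral_nonneg hl.le fun x _ => by positivity
  have hNm0 : 0 ≤ Nm := intervalIntegral.integral_nonneg hl0 fun x _ => by positivity
  have hNsplit : Nm + Np = N :=
    integral_add_adjacent_intervals (hIw (-l) 0 (hsub _ _ le_rfl hl.le hl0))
      (hIw 0 l (hsub _ _ hl0 le_rfl hl.le))
  -- key pointwise bound on [0, l]
  have hexp1 : ∀ q : ℝ, Real.exp (-q / 2) * Real.exp (q / 2) = 1 := by
    intro q; rw [← Real.exp_add]
    rw [show -q / 2 + q / 2 = 0 by ring, Real.exp_zero]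
  have hkeyp : ∀ x ∈ Set.Icc (0:ℝ) l, u x ^ 2 ≤ Np * B := by
    intro x hx
    have hxl : x ≤ l := hx.2
    have hx0 : (0:ℝ) ≤ x := hx.1
    have hsubxl : Set.uIcc x l ⊆ Set.Icc (-l) l := hsub x l (by linarith) le_rfl hxl
    set f : ℝ → ℝ := fun t => Real.exp (-(p * b t) / 2) * deriv u t with hf'
    set g : ℝ → ℝ := fun t => Real.exp (p * b t / 2) with hg'
    have hfg : ∀ t, f t * g t = deriv u t := by
      intro t
      have h1 := hexp1 (p * b t)
      simp only [hf', hg']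
      calc Real.exp (-(p * b t) / 2) * deriv u t * Real.exp (p * b t / 2)
          = Real.exp (-(p * b t) / 2) * Real.exp (p * b t / 2) * deriv u t := by ring
        _ = deriv u t := by rw [h1, one_mul]
    have hf2 : ∀ t, f t ^ 2 = ρ t * deriv u t ^ 2 := by
      intro t
      simp only [hf', hρ, mul_pow]
      congr 1
      rw [sq, ← Real.exp_add]; congr 1; ring
    have hg2 : ∀ t, g t ^ 2 = σ t := by
      intro t
      simp only [hg', hσ]
      rw [sq, ← Real.exp_add]; congr 1; ring
    have hfg2I : IntervalIntegrable (fun t => f t ^ 2) volume x l := by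
      rw [funext hf2]; exact hIw x l hsubxl
    have hg2I : IntervalIntegrable (fun t => g t ^ 2) volume x l := by
      rw [funext hg2]; exact (hσc.mono hsubxl).intervalIntegrable
    have hfgI : IntervalIntegrable (fun t => f t * g t) volume x l := by
      rw [funext hfg]; exact hId x l
    have hCS := integral_cauchy_schwarz hxl hfg2I hg2I hfgI
    rw [intervalIntegral.integral_congr (g := fun t => deriv u t) fun t _ => hfg t,
      lipschitz_ftc hK₀ x l, hup,
      intervalIntegral.integral_congr (g := fun t => ρ t * deriv u t ^ 2) fun t _ => hf2 t,
      intervalIntegral.integral_congr (g := fun t => σ t) fun t _ => hg2 t] at hCS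
    have h1 : (∫ t in x..l, ρ t * deriv u t ^ 2) ≤ Np := by
      have hadd := integral_add_adjacent_intervals (hIw 0 x (hsub 0 x hl0 (by linarith) hx0))
        (hIw x l hsubxl)
      have h0 : 0 ≤ ∫ t in (0:ℝ)..x, ρ t * deriv u t ^ 2 :=
        intervalIntegral.integral_nonneg hx0 fun t _ => by positivity
      rw [hNp']; linarith
    have h2 : (∫ t in x..l, σ t) ≤ B := by
      have hadd : (∫ t in (0:ℝ)..x, σ t) + (∫ t in x..l, σ t) = ∫ t in (0:ℝ)..l, σ t :=
        integral_add_adjacent_intervals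
          ((hσc.mono (hsub 0 x hl0 (by linarith) hx0)).intervalIntegrable)
          ((hσc.mono hsubxl).intervalIntegrable)
      have h0 : 0 ≤ ∫ t in (0:ℝ)..x, σ t :=
        intervalIntegral.integral_nonneg hx0 fun t _ => (Real.exp_pos _).le
      rw [hB']; linarith
    have h2' : 0 ≤ ∫ t in x..l, σ t :=
      intervalIntegral.integral_nonneg hxl fun t _ => (Real.exp_pos _).le
    have h3 : 0 ≤ ∫ t in x..l, ρ t * deriv u t ^ 2 :=
      intervalIntegral.integral_nonneg hxl fun t _ => by positivity
    have h4 := mul_le_mul h1 h2 h2' hNp0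
    calc u x ^ 2 = (0 - u x) ^ 2 := by ring
      _ ≤ (∫ t in x..l, ρ t * deriv u t ^ 2) * ∫ t in x..l, σ t := hCS
      _ ≤ Np * B := h4
  -- key pointwise bound on [-l, 0]
  have hkeym : ∀ x ∈ Set.Icc (-l) (0:ℝ), u x ^ 2 ≤ Nm * B := by
    intro x hx
    have hxl : -l ≤ x := hx.1
    have hx0 : x ≤ (0:ℝ) := hx.2
    have hsubxl : Set.uIcc (-l) x ⊆ Set.Icc (-l) l := hsub (-l) x le_rfl (by linarith) hxl
    set f : ℝ → ℝ := fun t => Real.exp (-(p * b t) / 2) * deriv u t with hf'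
    set g : ℝ → ℝ := fun t => Real.exp (p * b t / 2) with hg'
    have hfg : ∀ t, f t * g t = deriv u t := by
      intro t
      have h1 := hexp1 (p * b t)
      simp only [hf', hg']
      calc Real.exp (-(p * b t) / 2) * deriv u t * Real.exp (p * b t / 2)
          = Real.exp (-(p * b t) / 2) * Real.exp (p * b t / 2) * deriv u t := by ring
        _ = deriv u t := by rw [h1, one_mul]
    have hf2 : ∀ t, f t ^ 2 = ρ t * deriv u t ^ 2 := by
      intro t
      simp only [hf', hρ, mul_pow]
      congr 1
      rw [sq, ← Real.exp_add]; congr 1; ring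
    have hg2 : ∀ t, g t ^ 2 = σ t := by
      intro t
      simp only [hg', hσ]
      rw [sq, ← Real.exp_add]; congr 1; ring
    have hfg2I : IntervalIntegrable (fun t => f t ^ 2) volume (-l) x := by
      rw [funext hf2]; exact hIw (-l) x hsubxl
    have hg2I : IntervalIntegrable (fun t => g t ^ 2) volume (-l) x := by
      rw [funext hg2]; exact (hσc.mono hsubxl).intervalIntegrable
    have hfgI : IntervalIntegrable (fun t => f t * g t) volume (-l) x := by
      rw [funext hfg]; exact hId (-l) x
    have hCS := integral_cauchy_schwarz hxl hfg2I hg2I hfgI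
    rw [intervalIntegral.integral_congr (g := fun t => deriv u t) fun t _ => hfg t,
      lipschitz_ftc hK₀ (-l) x, hum,
      intervalIntegral.integral_congr (g := fun t => ρ t * deriv u t ^ 2) fun t _ => hf2 t,
      intervalIntegral.integral_congr (g := fun t => σ t) fun t _ => hg2 t] at hCS
    have h1 : (∫ t in (-l)..x, ρ t * deriv u t ^ 2) ≤ Nm := by
      have hadd := integral_add_adjacent_intervals (hIw (-l) x hsubxl)
        (hIw x 0 (hsub x 0 hxl hl.le hx0))
      have h0 : 0 ≤ ∫ t in x..(0:ℝ), ρ t * deriv u t ^ 2 :=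
        intervalIntegral.integral_nonneg hx0 fun t _ => by positivity
      rw [hNm']; linarith
    have h2 : (∫ t in (-l)..x, σ t) ≤ B := by
      have hadd : (∫ t in (-l)..x, σ t) + (∫ t in x..(0:ℝ), σ t) = ∫ t in (-l)..(0:ℝ), σ t :=
        integral_add_adjacent_intervals
          ((hσc.mono hsubxl).intervalIntegrable)
          ((hσc.mono (hsub x 0 hxl hl.le hx0)).intervalIntegrable)
      have h0 : 0 ≤ ∫ t in x..(0:ℝ), σ t :=
        intervalIntegral.integral_nonneg hx0 fun t _ => (Real.exp_pos _).le
      rw [← hBeven]; linarith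
    have h2' : 0 ≤ ∫ t in (-l)..x, σ t :=
      intervalIntegral.integral_nonneg hxl fun t _ => (Real.exp_pos _).le
    have h4 := mul_le_mul h1 h2 h2' hNm0
    calc u x ^ 2 = (u x - 0) ^ 2 := by ring
      _ ≤ (∫ t in (-l)..x, ρ t * deriv u t ^ 2) * ∫ t in (-l)..x, σ t := hCS
      _ ≤ Nm * B := h4
  -- integrate the pointwise bounds
  have hρu2I : ∀ a' b' : ℝ, Set.uIcc a' b' ⊆ Set.Icc (-l) l →
      IntervalIntegrable (fun x => ρ x * u x ^ 2) volume a' b' := fun a' b' hs =>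
    ((hρc.mono hs).mul ((huc.pow 2).continuousOn)).intervalIntegrable
  have hDp : (∫ x in (0:ℝ)..l, ρ x * u x ^ 2) ≤ A * (Np * B) := by
    have hmono := intervalIntegral.integral_mono_on (μ := volume) hl.le
      (hρu2I 0 l (hsub 0 l hl0 le_rfl hl.le))
      (((hρc.mono (hsub 0 l hl0 le_rfl hl.le)).intervalIntegrable).mul_const (Np * B))
      (fun x hx => mul_le_mul_of_nonneg_left (hkeyp x hx) (Real.exp_pos _).le)
    rw [intervalIntegral.integral_mul_const] at hmono
    linarith [hmono]
  have hDm : (∫ x in (-l)..(0:ℝ), ρ x * u x ^ 2) ≤ A * (Nm * B) := by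
    have hmono := intervalIntegral.integral_mono_on (μ := volume) hl0
      (hρu2I (-l) 0 (hsub (-l) 0 le_rfl hl.le hl0))
      (((hρc.mono (hsub (-l) 0 le_rfl hl.le hl0)).intervalIntegrable).mul_const (Nm * B))
      (fun x hx => mul_le_mul_of_nonneg_left (hkeym x hx) (Real.exp_pos _).le)
    rw [intervalIntegral.integral_mul_const, hAeven] at hmono
    linarith [hmono]
  have hDsplit : (∫ x in (-l)..(0:ℝ), ρ x * u x ^ 2) + (∫ x in (0:ℝ)..l, ρ x * u x ^ 2) = D :=
    integral_add_adjacent_intervals (hρu2I (-l) 0 (hsub (-l) 0 le_rfl hl.le hl0))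
      (hρu2I 0 l (hsub 0 l hl0 le_rfl hl.le))
  have hNAB : N * (A * B) = A * (Np * B) + A * (Nm * B) := by rw [← hNsplit]; ring
  have hDle : D ≤ N * (A * B) := by linarith [hDsplit, hDp, hDm]
  rw [le_div_iff₀ hDpos]
  have hABpos : 0 < A * B := mul_pos hApos hBpos
  rw [inv_mul_le_iff₀ hABpos]
  nlinarith [hDle]


lemma intervalIntegral_congr_Ioo {f g : ℝ → ℝ} {a' b' : ℝ} (h : a' ≤ b')
    (he : ∀ x ∈ Set.Ioo a' b', f x = g x) :
    ∫ x in a'..b', f x = ∫ x in a'..b', g x := by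
  rw [intervalIntegral.integral_of_le h, intervalIntegral.integral_of_le h,
    MeasureTheory.integral_Ioc_eq_integral_Ioo, MeasureTheory.integral_Ioc_eq_integral_Ioo]
  exact MeasureTheory.setIntegral_congr_fun measurableSet_Ioo he

lemma abs_min_sub_min_le' (a b c : ℝ) : |min a c - min b c| ≤ |a - b| := by
  rcases le_total a c with h1 | h1 <;> rcases le_total b c with h2 | h2
  · rw [min_eq_left h1, min_eq_left h2]
  · rw [min_eq_left h1, min_eq_right h2, abs_of_nonpos (by linarith), abs_sub_comm,
      abs_of_nonneg (by linarith)]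
    linarith
  · rw [min_eq_right h1, min_eq_left h2, abs_of_nonneg (by linarith),
      abs_of_nonneg (by linarith)]
    linarith
  · rw [min_eq_right h1, min_eq_right h2]
    simp [abs_nonneg]

lemma upper_bound (l : ℝ) (hl : 0 < l) (b : ℝ → ℝ) (K : NNReal)
    (hb : LipschitzOnWith K b (Set.Icc (-l) l))
    (hbeven : ∀ x ∈ Set.Icc (-l) l, b (-x) = b x)
    (c : ℝ) (hc0 : 0 < c) (hcl : c < l) (p : ℝ) :
    ∃ u : ℝ → ℝ, (∃ K₀ : NNReal, LipschitzWith K₀ u) ∧ u (-l) = 0 ∧ u l = 0 ∧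
      (∃ x ∈ Set.Icc (-l) l, u x ≠ 0) ∧
      (∫ x in (-l)..l, Real.exp (-p * b x) * deriv u x ^ 2) /
        (∫ x in (-l)..l, Real.exp (-p * b x) * u x ^ 2) ≤
        ((∫ x in (0:ℝ)..c, Real.exp (-p * b x)) * (∫ y in c..l, Real.exp (p * b y)))⁻¹ := by
  set ρ : ℝ → ℝ := fun x => Real.exp (-p * b x) with hρ
  set σ : ℝ → ℝ := fun x => Real.exp (p * b x) with hσ
  have hbc : ContinuousOn b (Set.Icc (-l) l) := hb.continuousOn
  have hρc : ContinuousOn ρ (Set.Icc (-l) l) :=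
    Real.continuous_exp.comp_continuousOn (continuousOn_const.mul hbc)
  have hσc : ContinuousOn σ (Set.Icc (-l) l) :=
    Real.continuous_exp.comp_continuousOn (continuousOn_const.mul hbc)
  have hll : -l ≤ l := by linarith
  have hsub : ∀ a' b' : ℝ, -l ≤ a' → b' ≤ l → a' ≤ b' → Set.uIcc a' b' ⊆ Set.Icc (-l) l :=
    fun a' b' h1 h2 h3 => by rw [Set.uIcc_of_le h3]; exact Set.Icc_subset_Icc h1 h2
  have hclsub : Set.Icc c l ⊆ Set.Icc (-l) l := Set.Icc_subset_Icc (by linarith) le_rfl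
  -- the clamp function
  set clamp : ℝ → ℝ := fun x => max c (min |x| l) with hclamp
  have hclamp_mem : ∀ x, clamp x ∈ Set.Icc c l := fun x =>
    ⟨le_max_left _ _, max_le hcl.le (min_le_right _ _)⟩
  have hclamp_lip : ∀ x y : ℝ, |clamp x - clamp y| ≤ |x - y| := by
    intro x y
    have h1 : |clamp x - clamp y| ≤ abs (min |x| l - min |y| l) := by
      simp only [hclamp]
      rw [max_comm c (min |x| l), max_comm c (min |y| l)]
      exact abs_max_sub_max_le_abs _ _ _
    have h2 : abs (min |x| l - min |y| l) ≤ abs (|x| - |y|) := abs_min_sub_min_le' _ _ _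
    have h3 : abs (|x| - |y|) ≤ |x - y| := abs_abs_sub_abs_le_abs_sub x y
    linarith
  -- integrability of σ on subintervals of [c,l]
  have hσI : ∀ y z : ℝ, y ∈ Set.Icc c l → z ∈ Set.Icc c l →
      IntervalIntegrable σ volume y z := by
    intro y z hy hz
    apply (hσc.mono _).intervalIntegrable
    exact (Set.uIcc_subset_Icc hy hz).trans hclsub
  set Bc := ∫ t in c..l, σ t with hBc'
  set Ac := ∫ x in (0:ℝ)..c, ρ x with hAc'
  have hBcpos : 0 < Bc :=
    intervalIntegral_pos_of_pos_on (hσI c l ⟨le_rfl, hcl.le⟩ ⟨hcl.le, le_rfl⟩)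
      (fun x _ => Real.exp_pos _) hcl
  have hAcpos : 0 < Ac :=
    intervalIntegral_pos_of_pos_on
      ((hρc.mono (hsub 0 c (by linarith) (by linarith) hc0.le)).intervalIntegrable)
      (fun x _ => Real.exp_pos _) hc0
  set v : ℝ → ℝ := fun x => ∫ t in (clamp x)..l, σ t with hv
  -- Lipschitz bound for v
  obtain ⟨Cσ, hCσ⟩ := (isCompact_Icc (a := -l) (b := l)).exists_bound_of_continuousOn hσc
  set M := max Cσ 0 with hM'
  have hM0 : 0 ≤ M := le_max_right _ _
  have hMb : ∀ t ∈ Set.Icc (-l) l, ‖σ t‖ ≤ M := fun t ht => (hCσ t ht).trans (le_max_left _ _)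
  have hvdiff : ∀ x y : ℝ, v x - v y = ∫ t in (clamp x)..(clamp y), σ t := by
    intro x y
    have h1 : (∫ t in clamp x..clamp y, σ t) + (∫ t in clamp y..l, σ t)
        = ∫ t in clamp x..l, σ t :=
      integral_add_adjacent_intervals (hσI _ _ (hclamp_mem x) (hclamp_mem y))
        (hσI _ _ (hclamp_mem y) ⟨hcl.le, le_rfl⟩)
    simp only [hv]; linarith
  have hvLip : LipschitzWith (Real.toNNReal M) v := by
    apply LipschitzWith.of_dist_le_mul
    intro x y
    rw [Real.dist_eq, Real.dist_eq, hvdiff x y, Real.coe_toNNReal M hM0]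
    have h1 : ‖∫ t in (clamp x)..(clamp y), σ t‖ ≤ M * |clamp y - clamp x| := by
      apply intervalIntegral.norm_integral_le_of_norm_le_const
      intro t ht
      apply hMb t
      apply hclsub
      exact Set.uIcc_subset_Icc (hclamp_mem x) (hclamp_mem y) (Set.uIoc_subset_uIcc ht)
    rw [Real.norm_eq_abs] at h1
    calc |∫ t in (clamp x)..(clamp y), σ t| ≤ M * |clamp y - clamp x| := h1
      _ ≤ M * |x - y| := by
          have := hclamp_lip y x
          rw [abs_sub_comm y x] at this
          exact mul_le_mul_of_nonneg_left this hM0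
  -- boundary and interior values
  have hclamp_of_le : ∀ x : ℝ, |x| ≤ c → clamp x = c := by
    intro x hx
    simp only [hclamp]
    rw [min_eq_left (hx.trans hcl.le), max_eq_left hx]
  have hvBc : ∀ x : ℝ, |x| ≤ c → v x = Bc := by
    intro x hx; simp only [hv]; rw [hclamp_of_le x hx]
  have hvl : v l = 0 := by
    simp only [hv, hclamp]
    rw [abs_of_pos hl, min_self, max_eq_right hcl.le, intervalIntegral.integral_same]
  have hvml : v (-l) = 0 := by
    simp only [hv, hclamp]
    rw [abs_neg, abs_of_pos hl, min_self, max_eq_right hcl.le,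
      intervalIntegral.integral_same]
  -- derivative computations
  set κ : ℝ → ℝ := fun y => ∫ t in c..y, σ t with hκ
  have hveq : ∀ y ∈ Set.Icc c l, (∫ t in y..l, σ t) = Bc - κ y := by
    intro y hy
    have h1 : κ y + (∫ t in y..l, σ t) = Bc :=
      integral_add_adjacent_intervals (hσI c y ⟨le_rfl, hcl.le⟩ hy)
        (hσI y l hy ⟨hcl.le, le_rfl⟩)
    linarith
  have hκd : ∀ y ∈ Set.Ioo c l, HasDerivAt κ (σ y) y := by
    intro y hy
    apply intervalIntegral.integral_hasDerivAt_right
      (hσI c y ⟨le_rfl, hcl.le⟩ ⟨hy.1.le, hy.2.le⟩)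
    · exact ⟨Set.Ioo (-l) l, Ioo_mem_nhds (by linarith [hy.1]) hy.2,
        (hσc.mono Set.Ioo_subset_Icc_self).aestronglyMeasurable measurableSet_Ioo⟩
    · exact hσc.continuousAt (Icc_mem_nhds (by linarith [hy.1]) hy.2)
  have hvdR : ∀ x ∈ Set.Ioo c l, deriv v x = -σ x := by
    intro x hx
    have hev : (fun y => Bc - κ y) =ᶠ[nhds x] v := by
      filter_upwards [Ioo_mem_nhds hx.1 hx.2] with y hy
      have hcy : clamp y = y := by
        simp only [hclamp]
        rw [abs_of_pos (hc0.trans hy.1), min_eq_left hy.2.le, max_eq_right hy.1.le]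
      simp only [hv]
      rw [hcy, hveq y ⟨hy.1.le, hy.2.le⟩]
    have hder : HasDerivAt (fun y => Bc - κ y) (-σ x) x := by
      simpa using (hκd x hx).const_sub Bc
    exact (hder.congr_of_eventuallyEq hev.symm).deriv
  have hvdM : ∀ x ∈ Set.Ioo (-c) c, deriv v x = 0 := by
    intro x hx
    have hev : (fun _ => Bc) =ᶠ[nhds x] v := by
      filter_upwards [Ioo_mem_nhds hx.1 hx.2] with y hy
      exact (hvBc y (abs_le.2 ⟨hy.1.le, hy.2.le⟩)).symm
    have hder : HasDerivAt (fun _ => Bc) (0:ℝ) x := hasDerivAt_const x Bc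
    exact (hder.congr_of_eventuallyEq hev.symm).deriv
  have hvdL : ∀ x ∈ Set.Ioo (-l) (-c), deriv v x = σ (-x) := by
    intro x hx
    have hmem : -x ∈ Set.Ioo c l := ⟨by linarith [hx.2], by linarith [hx.1]⟩
    have hev : (fun y => Bc - κ (-y)) =ᶠ[nhds x] v := by
      filter_upwards [Ioo_mem_nhds hx.1 hx.2] with y hy
      have hcy : clamp y = -y := by
        simp only [hclamp]
        rw [abs_of_neg (by linarith [hy.2] : y < 0),
          min_eq_left (by linarith [hy.1] : -y ≤ l),
          max_eq_right (by linarith [hy.2] : c ≤ -y)]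
      simp only [hv]
      rw [hcy, hveq (-y) ⟨by linarith [hy.2], by linarith [hy.1]⟩]
    have h1 : HasDerivAt κ (σ (-x)) (-x) := hκd (-x) hmem
    have h2 : HasDerivAt (fun y : ℝ => κ (-y)) (σ (-x) * (-1)) x :=
      HasDerivAt.comp x h1 (hasDerivAt_neg x)
    have hder : HasDerivAt (fun y => Bc - κ (-y)) (σ (-x)) x := by
      have := h2.const_sub Bc
      simpa using this
    exact (hder.congr_of_eventuallyEq hev.symm).deriv
  -- measurability / bound of deriv v
  have hdm : Measurable (deriv v) := measurable_deriv v
  have hdb : ∀ x, |deriv v x| ≤ (M : ℝ) := by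
    intro x
    have := norm_deriv_le_of_lipschitz (x₀ := x) hvLip
    rw [Real.norm_eq_abs, Real.coe_toNNReal M hM0] at this
    exact this
  have hIw : ∀ a' b' : ℝ, Set.uIcc a' b' ⊆ Set.Icc (-l) l →
      IntervalIntegrable (fun x => ρ x * deriv v x ^ 2) volume a' b' := by
    intro a' b' hs
    exact intervalIntegrable_mul_bounded hρc (hdm.pow_const 2)
      (M := M ^ 2) (fun x => by
        rw [abs_pow]
        exact pow_le_pow_left₀ (abs_nonneg _) (hdb x) 2) hs
  have hexpρσ : ∀ t : ℝ, ρ t * σ t ^ 2 = σ t := by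
    intro t
    simp only [hρ, hσ]
    rw [sq, ← mul_assoc, ← Real.exp_add, ← Real.exp_add]
    congr 1; ring
  -- numerator
  have hP3 : (∫ x in c..l, ρ x * deriv v x ^ 2) = Bc := by
    rw [intervalIntegral_congr_Ioo hcl.le (g := σ) fun x hx => by
      rw [hvdR x hx, neg_sq, hexpρσ]]
  have hP2 : (∫ x in (-c)..c, ρ x * deriv v x ^ 2) = 0 := by
    rw [intervalIntegral_congr_Ioo (by linarith : -c ≤ c) (g := fun _ => (0:ℝ)) fun x hx => by
      rw [hvdM x hx]; ring]
    simp
  have hP1 : (∫ x in (-l)..(-c), ρ x * deriv v x ^ 2) = Bc := by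
    have h1 : (∫ x in (-l)..(-c), ρ x * deriv v x ^ 2) = ∫ x in (-l)..(-c), σ x := by
      apply intervalIntegral_congr_Ioo (by linarith : -l ≤ -c)
      intro x hx
      have hxI : x ∈ Set.Icc (-l) l := ⟨hx.1.le, by linarith [hx.2]⟩
      have hσx : σ (-x) = σ x := by simp only [hσ]; rw [hbeven x hxI]
      rw [hvdL x hx, hσx, hexpρσ]
    have h3 := intervalIntegral.integral_comp_neg (a := c) (b := l) σ
    have h2 : (∫ x in (-l)..(-c), σ x) = Bc := by
      rw [← h3, hBc']
      apply intervalIntegral.integral_congr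
      intro x hx
      rw [Set.uIcc_of_le hcl.le] at hx
      simp only [hσ]
      rw [hbeven x (hclsub hx)]
    rw [h1, h2]
  have hNv : (∫ x in (-l)..l, ρ x * deriv v x ^ 2) = 2 * Bc := by
    have hadd1 : (∫ x in (-l)..(-c), ρ x * deriv v x ^ 2) +
        (∫ x in (-c)..c, ρ x * deriv v x ^ 2) = ∫ x in (-l)..c, ρ x * deriv v x ^ 2 :=
      integral_add_adjacent_intervals
        (hIw (-l) (-c) (hsub _ _ le_rfl (by linarith) (by linarith)))
        (hIw (-c) c (hsub _ _ (by linarith) (by linarith) (by linarith)))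
    have hadd2 : (∫ x in (-l)..c, ρ x * deriv v x ^ 2) +
        (∫ x in c..l, ρ x * deriv v x ^ 2) = ∫ x in (-l)..l, ρ x * deriv v x ^ 2 :=
      integral_add_adjacent_intervals
        (hIw (-l) c (hsub _ _ le_rfl (by linarith) (by linarith)))
        (hIw c l (hsub _ _ (by linarith) le_rfl hcl.le))
    rw [← hadd2, ← hadd1, hP1, hP2, hP3]; ring
  -- denominator
  have hvcont : Continuous v := hvLip.continuous
  have hρv2I : ∀ a' b' : ℝ, Set.uIcc a' b' ⊆ Set.Icc (-l) l →
      IntervalIntegrable (fun x => ρ x * v x ^ 2) volume a' b' := fun a' b' hs =>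
    ((hρc.mono hs).mul ((hvcont.pow 2).continuousOn)).intervalIntegrable
  have hQ2 : (∫ x in (-c)..c, ρ x * v x ^ 2) = 2 * Ac * Bc ^ 2 := by
    have h1 : (∫ x in (-c)..c, ρ x * v x ^ 2) = ∫ x in (-c)..c, ρ x * Bc ^ 2 := by
      apply intervalIntegral.integral_congr
      intro x hx
      rw [Set.uIcc_of_le (by linarith : -c ≤ c)] at hx
      show ρ x * v x ^ 2 = ρ x * Bc ^ 2
      rw [hvBc x (abs_le.2 ⟨hx.1, hx.2⟩)]
    have h2 : (∫ x in (-c)..(0:ℝ), ρ x) + (∫ x in (0:ℝ)..c, ρ x) = ∫ x in (-c)..c, ρ x :=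
      integral_add_adjacent_intervals
        ((hρc.mono (hsub (-c) 0 (by linarith) hl.le (by linarith))).intervalIntegrable)
        ((hρc.mono (hsub 0 c (by linarith) (by linarith) hc0.le)).intervalIntegrable)
    have h3 : (∫ x in (-c)..(0:ℝ), ρ x) = Ac := by
      rw [hAc']
      exact even_int (l := l) hc0.le (by linarith) fun x hx => by simp only [hρ]; rw [hbeven x hx]
    rw [h1, intervalIntegral.integral_mul_const, ← h2, h3, ← hAc']
    ring
  have hQ1 : 0 ≤ ∫ x in (-l)..(-c), ρ x * v x ^ 2 :=
    intervalIntegral.integral_nonneg (by linarith) fun x _ => by positivity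
  have hQ3 : 0 ≤ ∫ x in c..l, ρ x * v x ^ 2 :=
    intervalIntegral.integral_nonneg (by linarith) fun x _ => by positivity
  have hDv : 2 * Ac * Bc ^ 2 ≤ ∫ x in (-l)..l, ρ x * v x ^ 2 := by
    have hadd1 : (∫ x in (-l)..(-c), ρ x * v x ^ 2) +
        (∫ x in (-c)..c, ρ x * v x ^ 2) = ∫ x in (-l)..c, ρ x * v x ^ 2 :=
      integral_add_adjacent_intervals
        (hρv2I (-l) (-c) (hsub _ _ le_rfl (by linarith) (by linarith)))
        (hρv2I (-c) c (hsub _ _ (by linarith) (by linarith) (by linarith)))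
    have hadd2 : (∫ x in (-l)..c, ρ x * v x ^ 2) +
        (∫ x in c..l, ρ x * v x ^ 2) = ∫ x in (-l)..l, ρ x * v x ^ 2 :=
      integral_add_adjacent_intervals
        (hρv2I (-l) c (hsub _ _ le_rfl (by linarith) (by linarith)))
        (hρv2I c l (hsub _ _ (by linarith) le_rfl hcl.le))
    linarith [hQ1, hQ2, hQ3, hadd1, hadd2]
  have hDvpos : 0 < ∫ x in (-l)..l, ρ x * v x ^ 2 :=
    lt_of_lt_of_le (by positivity) hDv
  refine ⟨v, ⟨Real.toNNReal M, hvLip⟩, hvml, hvl, ⟨0, ⟨by linarith, by linarith⟩, ?_⟩, ?_⟩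
  · rw [hvBc 0 (by rw [abs_zero]; exact hc0.le)]
    exact ne_of_gt hBcpos
  · show (∫ x in (-l)..l, ρ x * deriv v x ^ 2) / (∫ x in (-l)..l, ρ x * v x ^ 2) ≤
      (Ac * Bc)⁻¹
    rw [hNv, div_le_iff₀ hDvpos]
    have h5 : (Ac * Bc)⁻¹ * (2 * Ac * Bc ^ 2) = 2 * Bc := by
      field_simp
    have h6 := mul_le_mul_of_nonneg_left hDv (inv_nonneg.2 (mul_pos hAcpos hBcpos).le)
    linarith [h5, h6]


lemma sub_integral_le {f : ℝ → ℝ} {a₀ a₁ a₂ a₃ : ℝ} (h01 : a₀ ≤ a₁) (h12 : a₁ ≤ a₂)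
    (h23 : a₂ ≤ a₃) (hf : ∀ x, 0 ≤ f x)
    (hI : ∀ u v : ℝ, a₀ ≤ u → u ≤ v → v ≤ a₃ → IntervalIntegrable f volume u v) :
    (∫ x in a₁..a₂, f x) ≤ ∫ x in a₀..a₃, f x := by
  have e1 : (∫ x in a₀..a₁, f x) + (∫ x in a₁..a₂, f x) = ∫ x in a₀..a₂, f x :=
    integral_add_adjacent_intervals (hI _ _ le_rfl h01 ((h12.trans h23)))
      (hI _ _ h01 h12 h23)
  have e2 : (∫ x in a₀..a₂, f x) + (∫ x in a₂..a₃, f x) = ∫ x in a₀..a₃, f x :=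
    integral_add_adjacent_intervals (hI _ _ le_rfl (h01.trans h12) h23)
      (hI _ _ (h01.trans h12) h23 le_rfl)
  have n1 : 0 ≤ ∫ x in a₀..a₁, f x := intervalIntegral.integral_nonneg h01 fun x _ => hf x
  have n3 : 0 ≤ ∫ x in a₂..a₃, f x := intervalIntegral.integral_nonneg h23 fun x _ => hf x
  linarith

lemma concentration (l : ℝ) (hl : 0 < l) (b : ℝ → ℝ) (K : NNReal)
    (hb : LipschitzOnWith K b (Set.Icc (-l) l))
    (hB : sSup {x ∈ Set.Icc 0 l | b x = sInf (b '' Set.Icc 0 l)} <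
          sInf {x ∈ Set.Icc 0 l | b x = sSup (b '' Set.Icc 0 l)}) :
    ∃ c : ℝ, 0 < c ∧ c < l ∧
      Tendsto (fun p => ((∫ x in (0:ℝ)..l, Real.exp (-p * b x)) /
          (∫ x in (0:ℝ)..c, Real.exp (-p * b x))) *
        ((∫ y in (0:ℝ)..l, Real.exp (p * b y)) / (∫ y in c..l, Real.exp (p * b y))))
        atTop (nhds 1) := by
  have h0l : Set.Icc (0:ℝ) l ⊆ Set.Icc (-l) l := Set.Icc_subset_Icc (by linarith) le_rfl
  have hbc : ContinuousOn b (Set.Icc 0 l) := hb.continuousOn.mono h0l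
  have hne : (Set.Icc (0:ℝ) l).Nonempty := Set.nonempty_Icc.2 hl.le
  obtain ⟨x₁, hx₁, hmin⟩ := isCompact_Icc.exists_isMinOn hne hbc
  obtain ⟨x₂, hx₂, hmax⟩ := isCompact_Icc.exists_isMaxOn hne hbc
  set b₁ := sInf (b '' Set.Icc 0 l) with hb₁'
  set b₂ := sSup (b '' Set.Icc 0 l) with hb₂'
  have hminle : ∀ y ∈ Set.Icc 0 l, b x₁ ≤ b y := fun y hy => isMinOn_iff.1 hmin y hy
  have hmaxle : ∀ y ∈ Set.Icc 0 l, b y ≤ b x₂ := fun y hy => isMaxOn_iff.1 hmax y hy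
  have hleast : IsLeast (b '' Set.Icc 0 l) (b x₁) := by
    constructor
    · exact ⟨x₁, hx₁, rfl⟩
    · rintro y ⟨z, hz, rfl⟩; exact hminle z hz
  have hgreat : IsGreatest (b '' Set.Icc 0 l) (b x₂) := by
    constructor
    · exact ⟨x₂, hx₂, rfl⟩
    · rintro y ⟨z, hz, rfl⟩; exact hmaxle z hz
  have hb₁ : b x₁ = b₁ := (hleast.csInf_eq).symm
  have hb₂ : b x₂ = b₂ := (hgreat.csSup_eq).symm
  set S₁ := {x ∈ Set.Icc (0:ℝ) l | b x = b₁} with hS₁'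
  set S₂ := {x ∈ Set.Icc (0:ℝ) l | b x = b₂} with hS₂'
  set s₁ := sSup S₁ with hs₁'
  set s₂ := sInf S₂ with hs₂'
  have hS₁bdd : BddAbove S₁ := (bddAbove_Icc (a := (0:ℝ)) (b := l)).mono fun x hx => hx.1
  have hS₂bdd : BddBelow S₂ := (bddBelow_Icc (b := (0:ℝ)) (a := l)).mono fun x hx => hx.1
  have hx₁S : x₁ ∈ S₁ := ⟨hx₁, hb₁⟩
  have hx₂S : x₂ ∈ S₂ := ⟨hx₂, hb₂⟩
  have hs₁0 : 0 ≤ s₁ := le_trans hx₁.1 (le_csSup hS₁bdd hx₁S)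
  have hx₁s₁ : x₁ ≤ s₁ := le_csSup hS₁bdd hx₁S
  have hs₂x₂ : s₂ ≤ x₂ := csInf_le hS₂bdd hx₂S
  have hs₂l : s₂ ≤ l := hs₂x₂.trans hx₂.2
  have hs₁s₂ : s₁ < s₂ := hB
  set c := (s₁ + s₂) / 2 with hc'
  have hc0 : 0 < c := by simp only [hc']; linarith
  have hs₁c : s₁ < c := by simp only [hc']; linarith
  have hcs₂ : c < s₂ := by simp only [hc']; linarith
  have hcl : c < l := lt_of_lt_of_le hcs₂ hs₂l
  refine ⟨c, hc0, hcl, ?_⟩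
  -- A-side setup
  obtain ⟨z, hz, hzmin⟩ := isCompact_Icc.exists_isMinOn (Set.nonempty_Icc.2 hcl.le)
    (hbc.mono (Set.Icc_subset_Icc hc0.le le_rfl))
  have hzmin' : ∀ y ∈ Set.Icc c l, b z ≤ b y := fun y hy => isMinOn_iff.1 hzmin y hy
  have hz0l : z ∈ Set.Icc 0 l := ⟨hc0.le.trans hz.1, hz.2⟩
  have hbz : b₁ < b z := by
    rcases lt_or_eq_of_le (hb₁ ▸ hminle z hz0l) with h | h
    · exact h
    · exfalso
      have : z ∈ S₁ := ⟨hz0l, h.symm⟩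
      have := le_csSup hS₁bdd this
      linarith [hz.1]
  set θ := (b₁ + b z) / 2 with hθ'
  have hθ1 : b₁ < θ := by simp only [hθ']; linarith
  have hθ2 : θ < b z := by simp only [hθ']; linarith
  -- interval near x₁ where b < θ
  have hcw : ContinuousWithinAt b (Set.Icc 0 l) x₁ := hbc x₁ hx₁
  have hev : b ⁻¹' Set.Iio θ ∈ nhdsWithin x₁ (Set.Icc 0 l) :=
    hcw (Iio_mem_nhds (by rw [hb₁]; exact hθ1))
  rw [Metric.mem_nhdsWithin_iff] at hev
  obtain ⟨ε, hε, hball⟩ := hev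
  have hx₁c : x₁ < c := lt_of_le_of_lt hx₁s₁ hs₁c
  set η := min (ε / 2) ((c - x₁) / 2) with hη'
  have hηpos : 0 < η := lt_min (by linarith) (by linarith)
  have hηc : x₁ + η ≤ c := by
    have := min_le_right (ε / 2) ((c - x₁) / 2)
    simp only [hη']; linarith [this]
  have hJθ : ∀ y ∈ Set.Icc x₁ (x₁ + η), b y < θ := by
    intro y hy
    have h1 : y ∈ Metric.ball x₁ ε := by
      rw [Metric.mem_ball, Real.dist_eq, abs_of_nonneg (by linarith [hy.1])]
      have := min_le_left (ε / 2) ((c - x₁) / 2)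
      linarith [hy.2]
    have h2 : y ∈ Set.Icc 0 l := ⟨hx₁.1.trans hy.1, by linarith [hy.2, hηc, hcl]⟩
    exact hball ⟨h1, h2⟩
  set m := b z with hm'
  -- B-side setup
  obtain ⟨w, hw, hwmax⟩ := isCompact_Icc.exists_isMaxOn (Set.nonempty_Icc.2 hc0.le)
    (hbc.mono (Set.Icc_subset_Icc le_rfl hcl.le))
  have hwmax' : ∀ y ∈ Set.Icc 0 c, b y ≤ b w := fun y hy => isMaxOn_iff.1 hwmax y hy
  have hw0l : w ∈ Set.Icc 0 l := ⟨hw.1, hw.2.trans hcl.le⟩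
  have hbw : b w < b₂ := by
    rcases lt_or_eq_of_le (hb₂ ▸ hmaxle w hw0l) with h | h
    · exact h
    · exfalso
      have : w ∈ S₂ := ⟨hw0l, h⟩
      have := csInf_le hS₂bdd this
      linarith [hw.2]
  set θ₂ := (b w + b₂) / 2 with hθ₂'
  have hθ₂1 : b w < θ₂ := by simp only [hθ₂']; linarith
  have hθ₂2 : θ₂ < b₂ := by simp only [hθ₂']; linarith
  have hcw₂ : ContinuousWithinAt b (Set.Icc 0 l) x₂ := hbc x₂ hx₂
  have hev₂ : b ⁻¹' Set.Ioi θ₂ ∈ nhdsWithin x₂ (Set.Icc 0 l) :=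
    hcw₂ (Ioi_mem_nhds (by rw [hb₂]; exact hθ₂2))
  rw [Metric.mem_nhdsWithin_iff] at hev₂
  obtain ⟨ε₂, hε₂, hball₂⟩ := hev₂
  have hcx₂ : c < x₂ := lt_of_lt_of_le hcs₂ hs₂x₂
  set η₂ := min (ε₂ / 2) ((x₂ - c) / 2) with hη₂'
  have hη₂pos : 0 < η₂ := lt_min (by linarith) (by linarith)
  have hη₂c : c ≤ x₂ - η₂ := by
    have := min_le_right (ε₂ / 2) ((x₂ - c) / 2)
    simp only [hη₂']; linarith [this]
  have hJ₂θ : ∀ y ∈ Set.Icc (x₂ - η₂) x₂, θ₂ < b y := by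
    intro y hy
    have h1 : y ∈ Metric.ball x₂ ε₂ := by
      rw [Metric.mem_ball, Real.dist_eq, abs_of_nonpos (by linarith [hy.2]),
        neg_sub]
      have := min_le_left (ε₂ / 2) ((x₂ - c) / 2)
      linarith [hy.1]
    have h2 : y ∈ Set.Icc 0 l := ⟨by linarith [hy.1, hη₂c, hc0], hy.2.trans hx₂.2⟩
    exact hball₂ ⟨h1, h2⟩
  -- generic facts
  have hρc : ∀ p : ℝ, ContinuousOn (fun x => Real.exp (-p * b x)) (Set.Icc (-l) l) := fun p =>
    Real.continuous_exp.comp_continuousOn (continuousOn_const.mul hb.continuousOn)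
  have hσc : ∀ p : ℝ, ContinuousOn (fun x => Real.exp (p * b x)) (Set.Icc (-l) l) := fun p =>
    Real.continuous_exp.comp_continuousOn (continuousOn_const.mul hb.continuousOn)
  have hsub : ∀ a' b' : ℝ, 0 ≤ a' → b' ≤ l → a' ≤ b' → Set.uIcc a' b' ⊆ Set.Icc (-l) l :=
    fun a' b' h1 h2 h3 => by
      rw [Set.uIcc_of_le h3]; exact Set.Icc_subset_Icc (by linarith) h2
  have hρI : ∀ (p u v : ℝ), 0 ≤ u → u ≤ v → v ≤ l →
      IntervalIntegrable (fun x => Real.exp (-p * b x)) volume u v := fun p u v h1 h2 h3 =>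
    ((hρc p).mono (hsub u v h1 h3 h2)).intervalIntegrable
  have hσI : ∀ (p u v : ℝ), 0 ≤ u → u ≤ v → v ≤ l →
      IntervalIntegrable (fun x => Real.exp (p * b x)) volume u v := fun p u v h1 h2 h3 =>
    ((hσc p).mono (hsub u v h1 h3 h2)).intervalIntegrable
  have hAc : ∀ p : ℝ, 0 < ∫ x in (0:ℝ)..c, Real.exp (-p * b x) := fun p =>
    intervalIntegral_pos_of_pos_on (hρI p 0 c le_rfl hc0.le hcl.le)
      (fun x _ => Real.exp_pos _) hc0
  have hBc : ∀ p : ℝ, 0 < ∫ y in c..l, Real.exp (p * b y) := fun p =>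
    intervalIntegral_pos_of_pos_on (hσI p c l hc0.le hcl.le le_rfl)
      (fun x _ => Real.exp_pos _) hcl
  have hAsplit : ∀ p : ℝ, (∫ x in (0:ℝ)..c, Real.exp (-p * b x)) +
      (∫ x in c..l, Real.exp (-p * b x)) = ∫ x in (0:ℝ)..l, Real.exp (-p * b x) := fun p =>
    integral_add_adjacent_intervals (hρI p 0 c le_rfl hc0.le hcl.le)
      (hρI p c l hc0.le hcl.le le_rfl)
  have hBsplit : ∀ p : ℝ, (∫ y in (0:ℝ)..c, Real.exp (p * b y)) +
      (∫ y in c..l, Real.exp (p * b y)) = ∫ y in (0:ℝ)..l, Real.exp (p * b y) := fun p =>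
    integral_add_adjacent_intervals (hσI p 0 c le_rfl hc0.le hcl.le)
      (hσI p c l hc0.le hcl.le le_rfl)
  have hAtail0 : ∀ p : ℝ, 0 ≤ ∫ x in c..l, Real.exp (-p * b x) := fun p =>
    intervalIntegral.integral_nonneg hcl.le fun x _ => (Real.exp_pos _).le
  have hBtail0 : ∀ p : ℝ, 0 ≤ ∫ y in (0:ℝ)..c, Real.exp (p * b y) := fun p =>
    intervalIntegral.integral_nonneg hc0.le fun x _ => (Real.exp_pos _).le
  -- A-side bounds
  have hAc_low : ∀ p : ℝ, 0 ≤ p →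
      η * Real.exp (-p * θ) ≤ ∫ x in (0:ℝ)..c, Real.exp (-p * b x) := by
    intro p hp
    have h1 : (∫ x in x₁..(x₁ + η), Real.exp (-p * θ)) ≤
        ∫ x in x₁..(x₁ + η), Real.exp (-p * b x) := by
      apply intervalIntegral.integral_mono_on (by linarith) intervalIntegrable_const
        (hρI p x₁ (x₁ + η) hx₁.1 (by linarith) (by linarith))
      intro x hx
      apply Real.exp_le_exp.2
      linarith [mul_le_mul_of_nonneg_left (hJθ x hx).le hp]
    rw [intervalIntegral.integral_const, smul_eq_mul] at h1
    have h2 : (∫ x in x₁..(x₁ + η), Real.exp (-p * b x)) ≤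
        ∫ x in (0:ℝ)..c, Real.exp (-p * b x) :=
      sub_integral_le hx₁.1 (by linarith) hηc (fun x => (Real.exp_pos _).le)
        (fun u v h1' h2' h3' => hρI p u v h1' h2' (h3'.trans hcl.le))
    calc η * Real.exp (-p * θ) = (x₁ + η - x₁) * Real.exp (-p * θ) := by ring_nf
      _ ≤ ∫ x in x₁..(x₁ + η), Real.exp (-p * b x) := h1
      _ ≤ _ := h2
  have hAtail_up : ∀ p : ℝ, 0 ≤ p →
      (∫ x in c..l, Real.exp (-p * b x)) ≤ (l - c) * Real.exp (-p * m) := by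
    intro p hp
    have h1 : (∫ x in c..l, Real.exp (-p * b x)) ≤ ∫ x in c..l, Real.exp (-p * m) := by
      apply intervalIntegral.integral_mono_on hcl.le
        (hρI p c l hc0.le hcl.le le_rfl) intervalIntegrable_const
      intro x hx
      apply Real.exp_le_exp.2
      linarith [mul_le_mul_of_nonneg_left (hzmin' x hx) hp]
    rw [intervalIntegral.integral_const, smul_eq_mul] at h1
    exact h1
  -- B-side bounds
  have hBc_low : ∀ p : ℝ, 0 ≤ p →
      η₂ * Real.exp (p * θ₂) ≤ ∫ y in c..l, Real.exp (p * b y) := by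
    intro p hp
    have h1 : (∫ y in (x₂ - η₂)..x₂, Real.exp (p * θ₂)) ≤
        ∫ y in (x₂ - η₂)..x₂, Real.exp (p * b y) := by
      apply intervalIntegral.integral_mono_on (by linarith) intervalIntegrable_const
        (hσI p (x₂ - η₂) x₂ (by linarith [hη₂c, hc0]) (by linarith) hx₂.2)
      intro x hx
      apply Real.exp_le_exp.2
      linarith [mul_le_mul_of_nonneg_left (hJ₂θ x hx).le hp]
    rw [intervalIntegral.integral_const, smul_eq_mul] at h1
    have h2 : (∫ y in (x₂ - η₂)..x₂, Real.exp (p * b y)) ≤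
        ∫ y in c..l, Real.exp (p * b y) :=
      sub_integral_le hη₂c (by linarith) hx₂.2 (fun x => (Real.exp_pos _).le)
        (fun u v h1' h2' h3' => hσI p u v (hc0.le.trans h1') h2' h3')
    calc η₂ * Real.exp (p * θ₂) = (x₂ - (x₂ - η₂)) * Real.exp (p * θ₂) := by ring_nf
      _ ≤ ∫ y in (x₂ - η₂)..x₂, Real.exp (p * b y) := h1
      _ ≤ _ := h2
  have hBtail_up : ∀ p : ℝ, 0 ≤ p →
      (∫ y in (0:ℝ)..c, Real.exp (p * b y)) ≤ c * Real.exp (p * b w) := by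
    intro p hp
    have h1 : (∫ y in (0:ℝ)..c, Real.exp (p * b y)) ≤
        ∫ y in (0:ℝ)..c, Real.exp (p * b w) := by
      apply intervalIntegral.integral_mono_on hc0.le
        (hσI p 0 c le_rfl hc0.le hcl.le) intervalIntegrable_const
      intro x hx
      apply Real.exp_le_exp.2
      linarith [mul_le_mul_of_nonneg_left (hwmax' x hx) hp]
    rw [intervalIntegral.integral_const, smul_eq_mul, sub_zero] at h1
    exact h1
  -- squeeze for the A-ratio
  have hAratup : ∀ p : ℝ, 0 ≤ p →
      (∫ x in (0:ℝ)..l, Real.exp (-p * b x)) / (∫ x in (0:ℝ)..c, Real.exp (-p * b x)) ≤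
        1 + ((l - c) / η) * Real.exp (p * (θ - m)) := by
    intro p hp
    have h4 : (∫ x in c..l, Real.exp (-p * b x)) / (∫ x in (0:ℝ)..c, Real.exp (-p * b x)) ≤
        ((l - c) * Real.exp (-p * m)) / (η * Real.exp (-p * θ)) :=
      div_le_div₀ (mul_nonneg (by linarith) (Real.exp_pos _).le) (hAtail_up p hp)
        (mul_pos hηpos (Real.exp_pos _)) (hAc_low p hp)
    have h5 : ((l - c) * Real.exp (-p * m)) / (η * Real.exp (-p * θ)) =
        ((l - c) / η) * Real.exp (p * (θ - m)) := by
      rw [mul_div_mul_comm, ← Real.exp_sub]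
      congr 2
      ring
    rw [← hAsplit p, add_div, div_self (hAc p).ne']
    linarith [h4, h5.symm.le, h5.le]
  have hArat1 : ∀ p : ℝ, 1 ≤
      (∫ x in (0:ℝ)..l, Real.exp (-p * b x)) / (∫ x in (0:ℝ)..c, Real.exp (-p * b x)) := by
    intro p
    rw [le_div_iff₀ (hAc p), one_mul]
    linarith [hAsplit p, hAtail0 p]
  have hBratup : ∀ p : ℝ, 0 ≤ p →
      (∫ y in (0:ℝ)..l, Real.exp (p * b y)) / (∫ y in c..l, Real.exp (p * b y)) ≤
        1 + (c / η₂) * Real.exp (p * (b w - θ₂)) := by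
    intro p hp
    have h4 : (∫ y in (0:ℝ)..c, Real.exp (p * b y)) / (∫ y in c..l, Real.exp (p * b y)) ≤
        (c * Real.exp (p * b w)) / (η₂ * Real.exp (p * θ₂)) :=
      div_le_div₀ (mul_nonneg hc0.le (Real.exp_pos _).le) (hBtail_up p hp)
        (mul_pos hη₂pos (Real.exp_pos _)) (hBc_low p hp)
    have h5 : (c * Real.exp (p * b w)) / (η₂ * Real.exp (p * θ₂)) =
        (c / η₂) * Real.exp (p * (b w - θ₂)) := by
      rw [mul_div_mul_comm, ← Real.exp_sub]
      congr 2
      ring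
    rw [← hBsplit p, add_div, div_self (hBc p).ne']
    linarith [h4, h5.le]
  have hBrat1 : ∀ p : ℝ, 1 ≤
      (∫ y in (0:ℝ)..l, Real.exp (p * b y)) / (∫ y in c..l, Real.exp (p * b y)) := by
    intro p
    rw [le_div_iff₀ (hBc p), one_mul]
    linarith [hBsplit p, hBtail0 p]
  -- limits of the bounding functions
  have hlim : ∀ C δ : ℝ, δ < 0 →
      Tendsto (fun p : ℝ => 1 + C * Real.exp (p * δ)) atTop (nhds 1) := by
    intro C δ hδ
    have h7 : Tendsto (fun p : ℝ => p * -δ) atTop atTop :=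
      Tendsto.atTop_mul_const (by linarith) tendsto_id
    have h8 : Tendsto (fun p : ℝ => p * δ) atTop atBot := by
      have : (fun p : ℝ => p * δ) = fun p => -(p * -δ) := by funext p; ring
      rw [this]
      exact tendsto_neg_atTop_atBot.comp h7
    have h9 : Tendsto (fun p : ℝ => Real.exp (p * δ)) atTop (nhds 0) :=
      Real.tendsto_exp_atBot.comp h8
    have h10 : Tendsto (fun p : ℝ => 1 + C * Real.exp (p * δ)) atTop (nhds (1 + C * 0)) :=
      Tendsto.add tendsto_const_nhds (h9.const_mul C)
    simpa using h10
  have hAtend : Tendsto (fun p =>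
      (∫ x in (0:ℝ)..l, Real.exp (-p * b x)) / (∫ x in (0:ℝ)..c, Real.exp (-p * b x)))
      atTop (nhds 1) := by
    apply tendsto_of_tendsto_of_tendsto_of_le_of_le' tendsto_const_nhds
      (hlim ((l - c) / η) (θ - m) (by linarith))
    · exact Eventually.of_forall hArat1
    · filter_upwards [eventually_ge_atTop (0:ℝ)] with p hp
      exact hAratup p hp
  have hBtend : Tendsto (fun p =>
      (∫ y in (0:ℝ)..l, Real.exp (p * b y)) / (∫ y in c..l, Real.exp (p * b y)))
      atTop (nhds 1) := by
    apply tendsto_of_tendsto_of_tendsto_of_le_of_le' tendsto_const_nhds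
      (hlim (c / η₂) (b w - θ₂) (by linarith))
    · exact Eventually.of_forall hBrat1
    · filter_upwards [eventually_ge_atTop (0:ℝ)] with p hp
      exact hBratup p hp
  have := hAtend.mul hBtend
  simpa using this


/-- The variational principal eigenvalue `λ₁(p)` of the one-dimensional drift operator
`-u'' + p b' u'` on `(-l, l)` with Dirichlet boundary conditions: the infimum of the
weighted Rayleigh quotient over nonzero Lipschitz functions vanishing at `±l`. -/
noncomputable def lam1d (l : ℝ) (b : ℝ → ℝ) (p : ℝ) : ℝ :=
  sInf { r | ∃ u : ℝ → ℝ, (∃ K, LipschitzWith K u) ∧ u (-l) = 0 ∧ u l = 0 ∧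
    (∃ x ∈ Set.Icc (-l) l, u x ≠ 0) ∧
    r = (∫ x in (-l)..l, Real.exp (-p * b x) * deriv u x ^ 2) /
        (∫ x in (-l)..l, Real.exp (-p * b x) * u x ^ 2) }

theorem principal_eigenvalue_asymptotics_1d (l : ℝ) (hl : 0 < l)
    (b : ℝ → ℝ) (K : NNReal) (hb : LipschitzOnWith K b (Set.Icc (-l) l))
    (hbeven : ∀ x ∈ Set.Icc (-l) l, b (-x) = b x)
    (hB : sSup {x ∈ Set.Icc 0 l | b x = sInf (b '' Set.Icc 0 l)} <
          sInf {x ∈ Set.Icc 0 l | b x = sSup (b '' Set.Icc 0 l)}) :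
    Filter.Tendsto
      (fun p => lam1d l b p * (∫ x in (0:ℝ)..l, Real.exp (-p * b x)) *
        (∫ y in (0:ℝ)..l, Real.exp (p * b y)))
      Filter.atTop (nhds 1) := by
  obtain ⟨c, hc0, hcl, htend⟩ := concentration l hl b K hb hB
  have hll : -l ≤ l := by linarith
  have hbc : ContinuousOn b (Set.Icc (-l) l) := hb.continuousOn
  have hρc : ∀ p : ℝ, ContinuousOn (fun x => Real.exp (-p * b x)) (Set.Icc (-l) l) := fun p =>
    Real.continuous_exp.comp_continuousOn (continuousOn_const.mul hbc)
  have hσc : ∀ p : ℝ, ContinuousOn (fun x => Real.exp (p * b x)) (Set.Icc (-l) l) := fun p =>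
    Real.continuous_exp.comp_continuousOn (continuousOn_const.mul hbc)
  have hsub : ∀ a' b' : ℝ, -l ≤ a' → b' ≤ l → a' ≤ b' → Set.uIcc a' b' ⊆ Set.Icc (-l) l :=
    fun a' b' h1 h2 h3 => by rw [Set.uIcc_of_le h3]; exact Set.Icc_subset_Icc h1 h2
  have hA : ∀ p : ℝ, 0 < ∫ x in (0:ℝ)..l, Real.exp (-p * b x) := fun p =>
    intervalIntegral_pos_of_pos_on
      (((hρc p).mono (hsub 0 l (by linarith) le_rfl hl.le)).intervalIntegrable)
      (fun x _ => Real.exp_pos _) hl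
  have hBB : ∀ p : ℝ, 0 < ∫ y in (0:ℝ)..l, Real.exp (p * b y) := fun p =>
    intervalIntegral_pos_of_pos_on
      (((hσc p).mono (hsub 0 l (by linarith) le_rfl hl.le)).intervalIntegrable)
      (fun x _ => Real.exp_pos _) hl
  have hAc : ∀ p : ℝ, 0 < ∫ x in (0:ℝ)..c, Real.exp (-p * b x) := fun p =>
    intervalIntegral_pos_of_pos_on
      (((hρc p).mono (hsub 0 c (by linarith) (by linarith) hc0.le)).intervalIntegrable)
      (fun x _ => Real.exp_pos _) hc0
  have hBc : ∀ p : ℝ, 0 < ∫ y in c..l, Real.exp (p * b y) := fun p =>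
    intervalIntegral_pos_of_pos_on
      (((hσc p).mono (hsub c l (by linarith) le_rfl hcl.le)).intervalIntegrable)
      (fun x _ => Real.exp_pos _) hcl
  have hbdd : ∀ p : ℝ, BddBelow { r | ∃ u : ℝ → ℝ, (∃ K₀, LipschitzWith K₀ u) ∧
      u (-l) = 0 ∧ u l = 0 ∧ (∃ x ∈ Set.Icc (-l) l, u x ≠ 0) ∧
      r = (∫ x in (-l)..l, Real.exp (-p * b x) * deriv u x ^ 2) /
        (∫ x in (-l)..l, Real.exp (-p * b x) * u x ^ 2) } := by
    intro p
    refine ⟨0, ?_⟩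
    rintro r ⟨u, _, _, _, _, rfl⟩
    apply div_nonneg
    · exact intervalIntegral.integral_nonneg hll fun x _ => by positivity
    · exact intervalIntegral.integral_nonneg hll fun x _ => by positivity
  have hlow : ∀ p : ℝ,
      ((∫ x in (0:ℝ)..l, Real.exp (-p * b x)) * (∫ y in (0:ℝ)..l, Real.exp (p * b y)))⁻¹ ≤
        lam1d l b p := by
    intro p
    unfold lam1d
    obtain ⟨u, huL, h1, h2, h3, _⟩ := upper_bound l hl b K hb hbeven c hc0 hcl p
    refine le_csInf ⟨(∫ x in (-l)..l, Real.exp (-p * b x) * deriv u x ^ 2) /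
        (∫ x in (-l)..l, Real.exp (-p * b x) * u x ^ 2), u, huL, h1, h2, h3, rfl⟩ ?_
    rintro r ⟨u', huL', h1', h2', h3', rfl⟩
    exact lower_bound l hl b K hb hbeven p u' huL' h1' h2' h3'
  have hup : ∀ p : ℝ, lam1d l b p ≤
      ((∫ x in (0:ℝ)..c, Real.exp (-p * b x)) * (∫ y in c..l, Real.exp (p * b y)))⁻¹ := by
    intro p
    obtain ⟨u, huL, h1, h2, h3, h4⟩ := upper_bound l hl b K hb hbeven c hc0 hcl p
    refine le_trans ?_ h4
    unfold lam1d
    exact csInf_le (hbdd p) ⟨u, huL, h1, h2, h3, rfl⟩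
  apply tendsto_of_tendsto_of_tendsto_of_le_of_le' tendsto_const_nhds htend
  · filter_upwards with p
    have hABpos : 0 < (∫ x in (0:ℝ)..l, Real.exp (-p * b x)) *
        ∫ y in (0:ℝ)..l, Real.exp (p * b y) := mul_pos (hA p) (hBB p)
    have h := mul_le_mul_of_nonneg_right (hlow p) hABpos.le
    rw [inv_mul_cancel₀ hABpos.ne'] at h
    nlinarith [h]
  · filter_upwards with p
    have h := mul_le_mul_of_nonneg_right
      (mul_le_mul_of_nonneg_right (hup p) (hA p).le) (hBB p).le
    have heq : ((∫ x in (0:ℝ)..c, Real.exp (-p * b x)) *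
          (∫ y in c..l, Real.exp (p * b y)))⁻¹ *
        (∫ x in (0:ℝ)..l, Real.exp (-p * b x)) * (∫ y in (0:ℝ)..l, Real.exp (p * b y)) =
        ((∫ x in (0:ℝ)..l, Real.exp (-p * b x)) / (∫ x in (0:ℝ)..c, Real.exp (-p * b x))) *
        ((∫ y in (0:ℝ)..l, Real.exp (p * b y)) / (∫ y in c..l, Real.exp (p * b y))) := by
      field_simp
    nlinarith [h, heq]
end

section
/- Let l > 0 and let b : [0, l] → ℝ be continuous. Define D₀ := (0,l) × (0,l) and D₁ := {(x,y) : 0 < y < x < l}, and set ω₀ := max over the closure of D₀ of (b(y) − b(x)) and ω₁ := max over the closure of D₁ of (b(y) − b(x)). If ω₀ > ω₁, then the ratio (∬_{D₁} e^{p(b(y)−b(x))} dx dy) / (∬_{D₀} e^{p(b(y)−b(x))} dx dy) tends to 0 as p → ∞. -/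
open MeasureTheory Filter

theorem ratio_of_laplace_integrals_tendsto_zero (l : ℝ) (hl : 0 < l)
    (b : ℝ → ℝ) (hb : ContinuousOn b (Set.Icc 0 l)) :
    let D₀ : Set (ℝ × ℝ) := Set.Ioo 0 l ×ˢ Set.Ioo 0 l
    let D₁ : Set (ℝ × ℝ) := {z | 0 < z.2 ∧ z.2 < z.1 ∧ z.1 < l}
    let ω₀ : ℝ := sSup ((fun z : ℝ × ℝ => b z.2 - b z.1) '' closure D₀)
    let ω₁ : ℝ := sSup ((fun z : ℝ × ℝ => b z.2 - b z.1) '' closure D₁)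
    ω₁ < ω₀ →
    Filter.Tendsto
      (fun p => (∫ z in D₁, Real.exp (p * (b z.2 - b z.1))) /
        (∫ z in D₀, Real.exp (p * (b z.2 - b z.1))))
      Filter.atTop (nhds 0) := by
  intro D₀ D₁ ω₀ ω₁ hω
  set f : ℝ × ℝ → ℝ := fun z => b z.2 - b z.1 with hf_def
  set K : Set (ℝ × ℝ) := Set.Icc 0 l ×ˢ Set.Icc 0 l with hK_def
  have hKc : IsCompact K := isCompact_Icc.prod isCompact_Icc
  have hf : ContinuousOn f K :=
    ((hb.comp continuous_snd.continuousOn fun z hz => hz.2).sub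
      (hb.comp continuous_fst.continuousOn fun z hz => hz.1))
  have hclD₀ : closure D₀ = K := by
    show closure (Set.Ioo 0 l ×ˢ Set.Ioo 0 l) = _
    rw [closure_prod_eq, closure_Ioo hl.ne]
  have hD₀K : D₀ ⊆ K := fun z hz => ⟨Set.Ioo_subset_Icc_self hz.1, Set.Ioo_subset_Icc_self hz.2⟩
  have hD₁D₀ : D₁ ⊆ D₀ := fun z hz =>
    ⟨⟨hz.1.trans hz.2.1, hz.2.2⟩, hz.1, hz.2.1.trans hz.2.2⟩
  have hclD₁K : closure D₁ ⊆ K := hclD₀ ▸ closure_mono hD₁D₀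
  have hclD₁c : IsCompact (closure D₁) := hKc.of_isClosed_subset isClosed_closure hclD₁K
  have hω₁bd : ∀ z ∈ D₁, f z ≤ ω₁ := fun z hz =>
    le_csSup (hclD₁c.bddAbove_image (hf.mono hclD₁K)) ⟨z, subset_closure hz, rfl⟩
  have hKne : K.Nonempty := ⟨(0, 0), ⟨⟨le_rfl, hl.le⟩, ⟨le_rfl, hl.le⟩⟩⟩
  obtain ⟨z₀, hz₀K, hsup, hmax⟩ := hKc.exists_sSup_image_eq_and_ge hKne hf
  have hω₀eq : ω₀ = f z₀ := by
    have h0 : ω₀ = sSup (f '' closure D₀) := rfl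
    rw [h0, hclD₀, hsup]
  set ω : ℝ := (ω₀ + ω₁) / 2 with hωdef
  have hω₁ω : ω₁ < ω := by rw [hωdef]; linarith
  have hωω₀ : ω < ω₀ := by rw [hωdef]; linarith
  have hz₀gt : ω < f z₀ := hω₀eq ▸ hωω₀
  have hev : ∀ᶠ z in nhdsWithin z₀ K, ω < f z :=
    (hf z₀ hz₀K).eventually (eventually_gt_nhds hz₀gt)
  obtain ⟨U, hUopen, hz₀U, hU⟩ := mem_nhdsWithin.mp hev
  set V : Set (ℝ × ℝ) := U ∩ D₀ with hVdef
  have hVopen : IsOpen V := hUopen.inter (isOpen_Ioo.prod isOpen_Ioo)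
  have hVne : V.Nonempty := by
    have hz₀cl : z₀ ∈ closure D₀ := hclD₀ ▸ hz₀K
    rcases _root_.mem_closure_iff.mp hz₀cl U hUopen hz₀U with ⟨y, hyU, hyD₀⟩
    exact ⟨y, hyU, hyD₀⟩
  have hVsub : V ⊆ D₀ := Set.inter_subset_right
  have hVgt : ∀ z ∈ V, ω < f z := fun z hz => hU ⟨hz.1, hD₀K hz.2⟩
  have hVpos : 0 < volume V := hVopen.measure_pos volume hVne
  have hKfin : volume K < ⊤ := hKc.measure_lt_top
  have hVfin : volume V < ⊤ := lt_of_le_of_lt (measure_mono (hVsub.trans hD₀K)) hKfin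
  have hD₁fin : volume D₁ < ⊤ := lt_of_le_of_lt (measure_mono (hD₁D₀.trans hD₀K)) hKfin
  set A : ℝ := (volume D₁).toReal with hA
  set B : ℝ := (volume V).toReal with hB
  have hBpos : 0 < B := ENNReal.toReal_pos hVpos.ne' hVfin.ne
  have hAnn : 0 ≤ A := ENNReal.toReal_nonneg
  have msD₁ : MeasurableSet D₁ := by
    have h1 : IsOpen {z : ℝ × ℝ | 0 < z.2} := isOpen_lt continuous_const continuous_snd
    have h2 : IsOpen {z : ℝ × ℝ | z.2 < z.1} := isOpen_lt continuous_snd continuous_fst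
    have h3 : IsOpen {z : ℝ × ℝ | z.1 < l} := isOpen_lt continuous_fst continuous_const
    exact ((h1.inter (h2.inter h3)).measurableSet)
  have hIntK : ∀ p : ℝ, IntegrableOn (fun z => Real.exp (p * f z)) K volume := fun p =>
    (Real.continuous_exp.comp_continuousOn (continuousOn_const.mul hf)).integrableOn_compact hKc
  have key : ∀ p : ℝ, 0 ≤ p →
      (∫ z in D₁, Real.exp (p * f z)) / (∫ z in D₀, Real.exp (p * f z)) ≤
        (A / B) * Real.exp (p * (ω₁ - ω)) := by
    intro p hp
    have hIntD₁ := (hIntK p).mono_set (hD₁D₀.trans hD₀K)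
    have hIntD₀ := (hIntK p).mono_set hD₀K
    have hIntV := (hIntK p).mono_set (hVsub.trans hD₀K)
    have hnum : (∫ z in D₁, Real.exp (p * f z)) ≤ A * Real.exp (p * ω₁) := by
      have h1 : (∫ z in D₁, Real.exp (p * f z)) ≤ ∫ _z in D₁, Real.exp (p * ω₁) :=
        setIntegral_mono_on hIntD₁ (integrableOn_const hD₁fin.ne) msD₁
          (fun z hz => Real.exp_le_exp.mpr (mul_le_mul_of_nonneg_left (hω₁bd z hz) hp))
      simpa [setIntegral_const, smul_eq_mul, hA, Measure.real] using h1
    have hden : B * Real.exp (p * ω) ≤ ∫ z in D₀, Real.exp (p * f z) := by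
      have h1 : (∫ _z in V, Real.exp (p * ω)) ≤ ∫ z in V, Real.exp (p * f z) :=
        setIntegral_mono_on (integrableOn_const hVfin.ne) hIntV
          hVopen.measurableSet
          (fun z hz => Real.exp_le_exp.mpr (mul_le_mul_of_nonneg_left (hVgt z hz).le hp))
      have h2 : (∫ z in V, Real.exp (p * f z)) ≤ ∫ z in D₀, Real.exp (p * f z) :=
        setIntegral_mono_set hIntD₀ (Filter.Eventually.of_forall fun z => (Real.exp_pos _).le)
          (HasSubset.Subset.eventuallyLE hVsub)
      calc B * Real.exp (p * ω) = ∫ _z in V, Real.exp (p * ω) := by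
            rw [setIntegral_const, smul_eq_mul]; rfl
        _ ≤ _ := h1.trans h2
    have hdenpos : 0 < B * Real.exp (p * ω) := mul_pos hBpos (Real.exp_pos _)
    have hdiv := div_le_div₀ (by positivity) hnum hdenpos hden
    calc (∫ z in D₁, Real.exp (p * f z)) / (∫ z in D₀, Real.exp (p * f z))
        ≤ (A * Real.exp (p * ω₁)) / (B * Real.exp (p * ω)) := hdiv
      _ = (A / B) * Real.exp (p * (ω₁ - ω)) := by
          rw [mul_div_mul_comm, ← Real.exp_sub, show p * ω₁ - p * ω = p * (ω₁ - ω) by ring]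
  have hg : Tendsto (fun p : ℝ => (A / B) * Real.exp (p * (ω₁ - ω))) atTop (nhds 0) := by
    have h1 : Tendsto (fun p : ℝ => p * (ω₁ - ω)) atTop atBot :=
      Filter.tendsto_id.atTop_mul_const_of_neg (by linarith : ω₁ - ω < 0)
    have h2 := Real.tendsto_exp_atBot.comp h1
    simpa using h2.const_mul (A / B)
  show Tendsto (fun p : ℝ => (∫ z in D₁, Real.exp (p * f z)) / (∫ z in D₀, Real.exp (p * f z)))
    atTop (nhds 0)
  apply squeeze_zero' ?_ ?_ hg
  · filter_upwards with p
    exact div_nonneg (setIntegral_nonneg msD₁ fun z _ => (Real.exp_pos _).le)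
      (setIntegral_nonneg (isOpen_Ioo.prod isOpen_Ioo).measurableSet fun z _ => (Real.exp_pos _).le)
  · filter_upwards [eventually_ge_atTop (0:ℝ)] with p hp using key p hp
end

section
/- Let L > 0 and μ > 0, and let g : [0, L] → ℝ be continuous with g(x) > 0 for all x ∈ (0, L] and lim_{x→0⁺} x^{−μ} g(x) = 1. Then lim_{p→∞} p^{1/μ} ∫₀ᴸ e^{−p g(x)} dx = Γ(1/μ + 1), where Γ is the Gamma function; that is, ∫₀ᴸ e^{−pg(x)} dx is asymptotically equivalent to Γ(1/μ + 1) p^{−1/μ} as p → ∞. -/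
open MeasureTheory

lemma integrableOn_exp_model {b μ : ℝ} (hb : 0 < b) (hμ : 0 < μ) :
    IntegrableOn (fun x : ℝ => Real.exp (-b * x ^ μ)) (Set.Ioi 0) := by
  by_contra h
  have h0 : (∫ x in Set.Ioi (0:ℝ), Real.exp (-b * x ^ μ)) = 0 := integral_undef h
  rw [integral_exp_neg_mul_rpow hμ hb] at h0
  have h1 : 0 < b ^ (-1/μ) * Real.Gamma (1/μ + 1) :=
    mul_pos (Real.rpow_pos_of_pos hb _) (Real.Gamma_pos_of_pos (by positivity))
  linarith

lemma tail_model {μ a δ : ℝ} (hμ : 0 < μ) (ha : 0 < a) (hδ : 0 < δ) :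
    Filter.Tendsto (fun p : ℝ => p ^ (1/μ) * ∫ x in Set.Ioi δ, Real.exp (-(p*a) * x ^ μ))
      Filter.atTop (nhds 0) := by
  set c : ℝ := a * δ ^ μ with hc
  have hcpos : 0 < c := mul_pos ha (Real.rpow_pos_of_pos hδ _)
  set C : ℝ := ∫ x in Set.Ioi δ, Real.exp (-a * x ^ μ) with hC
  have hint : IntegrableOn (fun x : ℝ => Real.exp (-a * x ^ μ)) (Set.Ioi δ) :=
    (integrableOn_exp_model ha hμ).mono_set (Set.Ioi_subset_Ioi hδ.le)
  have key : ∀ p : ℝ, 1 ≤ p → (∫ x in Set.Ioi δ, Real.exp (-(p*a) * x ^ μ))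
      ≤ Real.exp (-(c*(p-1))) * C := by
    intro p hp
    have hp0 : 0 < p := lt_of_lt_of_le one_pos hp
    calc (∫ x in Set.Ioi δ, Real.exp (-(p*a) * x ^ μ))
        ≤ ∫ x in Set.Ioi δ, Real.exp (-(c*(p-1))) * Real.exp (-a * x ^ μ) := by
          apply setIntegral_mono_on
            ((integrableOn_exp_model (mul_pos hp0 ha) hμ).mono_set (Set.Ioi_subset_Ioi hδ.le))
            (hint.const_mul _) measurableSet_Ioi
          intro x hx
          rw [← Real.exp_add]
          apply Real.exp_le_exp.mpr
          have hxδ : δ ^ μ ≤ x ^ μ := Real.rpow_le_rpow hδ.le (le_of_lt hx) hμ.le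
          have h2 : (p-1) * a * δ ^ μ ≤ (p-1) * a * x ^ μ :=
            mul_le_mul_of_nonneg_left hxδ (mul_nonneg (by linarith) ha.le)
          nlinarith [h2]
      _ = Real.exp (-(c*(p-1))) * C := integral_const_mul _ _
  have hlim : Filter.Tendsto (fun p : ℝ => p ^ (1/μ) * (Real.exp (-(c*(p-1))) * C))
      Filter.atTop (nhds 0) := by
    have h0 : Filter.Tendsto (fun p : ℝ => p ^ (1/μ) * Real.exp (-c*p)) Filter.atTop (nhds 0) :=
      tendsto_rpow_mul_exp_neg_mul_atTop_nhds_zero _ c hcpos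
    have h1 := h0.const_mul (C * Real.exp c)
    rw [mul_zero] at h1
    apply h1.congr
    intro p
    rw [show -(c*(p-1)) = -c*p + c by ring, Real.exp_add]
    ring
  apply squeeze_zero' ?_ ?_ hlim
  · filter_upwards [Filter.eventually_ge_atTop (0:ℝ)] with p hp
    exact mul_nonneg (Real.rpow_nonneg hp _)
      (setIntegral_nonneg measurableSet_Ioi fun x _ => (Real.exp_pos _).le)
  · filter_upwards [Filter.eventually_ge_atTop (1:ℝ)] with p hp
    exact mul_le_mul_of_nonneg_left (key p hp) (Real.rpow_nonneg (by linarith) _)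

lemma main_model {μ a δ : ℝ} (hμ : 0 < μ) (ha : 0 < a) (hδ : 0 < δ) :
    Filter.Tendsto (fun p : ℝ => p ^ (1/μ) * ∫ x in Set.Ioc 0 δ, Real.exp (-(p*a) * x ^ μ))
      Filter.atTop (nhds (a ^ (-1/μ) * Real.Gamma (1/μ + 1))) := by
  have h := (tail_model hμ ha hδ).neg.const_add (a ^ (-1/μ) * Real.Gamma (1/μ + 1))
  rw [neg_zero, add_zero] at h
  apply h.congr'
  filter_upwards [Filter.eventually_gt_atTop (0:ℝ)] with p hp
  have hpa : 0 < p * a := mul_pos hp ha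
  have hsplit : (∫ x in Set.Ioi (0:ℝ), Real.exp (-(p*a) * x ^ μ))
      = (∫ x in Set.Ioc (0:ℝ) δ, Real.exp (-(p*a) * x ^ μ))
        + ∫ x in Set.Ioi δ, Real.exp (-(p*a) * x ^ μ) := by
    rw [← setIntegral_union (Set.Ioc_disjoint_Ioi le_rfl) measurableSet_Ioi
      ((integrableOn_exp_model hpa hμ).mono_set Set.Ioc_subset_Ioi_self)
      ((integrableOn_exp_model hpa hμ).mono_set (Set.Ioi_subset_Ioi hδ.le)),
      Set.Ioc_union_Ioi_eq_Ioi hδ.le]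
  have hval : (∫ x in Set.Ioi (0:ℝ), Real.exp (-(p*a) * x ^ μ))
      = (p*a) ^ (-1/μ) * Real.Gamma (1/μ + 1) := integral_exp_neg_mul_rpow hμ hpa
  have hpow : p ^ (1/μ) * (p*a) ^ (-1/μ) = a ^ (-1/μ) := by
    rw [Real.mul_rpow hp.le ha.le, ← mul_assoc, ← Real.rpow_add hp,
      show (1:ℝ)/μ + -1/μ = 0 by ring, Real.rpow_zero, one_mul]
  rw [show (∫ x in Set.Ioc (0:ℝ) δ, Real.exp (-(p*a) * x ^ μ))
      = (p*a) ^ (-1/μ) * Real.Gamma (1/μ + 1)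
        - ∫ x in Set.Ioi δ, Real.exp (-(p*a) * x ^ μ) by linarith,
    mul_sub, ← mul_assoc, hpow]
  ring

theorem laplace_asymptotics_gamma (L μ : ℝ) (hL : 0 < L) (hμ : 0 < μ)
    (g : ℝ → ℝ) (hg : ContinuousOn g (Set.Icc 0 L))
    (hgpos : ∀ x ∈ Set.Ioc 0 L, 0 < g x)
    (hglim : Filter.Tendsto (fun x => x ^ (-μ) * g x)
      (nhdsWithin 0 (Set.Ioi 0)) (nhds 1)) :
    Filter.Tendsto
      (fun p : ℝ => p ^ (1 / μ) * ∫ x in Set.Icc (0:ℝ) L, Real.exp (-p * g x))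
      Filter.atTop (nhds (Real.Gamma (1 / μ + 1))) := by
  have hΓpos : 0 < Real.Gamma (1/μ + 1) := Real.Gamma_pos_of_pos (by positivity)
  rw [Metric.tendsto_nhds]
  intro η hη
  -- continuity of t ↦ t^(-1/μ) * Γ at 1
  have hcont : Filter.Tendsto (fun t : ℝ => t ^ (-1/μ) * Real.Gamma (1/μ + 1))
      (nhds 1) (nhds (Real.Gamma (1/μ + 1))) := by
    have h1 : ContinuousAt (fun t : ℝ => t ^ (-1/μ)) 1 :=
      Real.continuousAt_rpow_const 1 _ (Or.inl one_ne_zero)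
    have h2 := h1.mul (continuousAt_const (y := Real.Gamma (1/μ + 1)))
    simpa [ContinuousAt, Real.one_rpow, Pi.mul_def] using h2
  obtain ⟨ε₀, hε₀, hε₀'⟩ := Metric.eventually_nhds_iff.mp
    (Metric.tendsto_nhds.mp hcont (η/4) (by linarith))
  set ε : ℝ := min (ε₀/2) (1/2) with hεdef
  have hεpos : 0 < ε := lt_min (by linarith) (by norm_num)
  have hεhalf : ε ≤ 1/2 := min_le_right _ _
  have hεlt : ε < ε₀ := lt_of_le_of_lt (min_le_left _ _) (by linarith)
  have h1ε : 0 < 1 - ε := by linarith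
  have h2ε : 0 < 1 + ε := by linarith
  have hdist : ∀ t : ℝ, |t - 1| < ε₀ →
      |t ^ (-1/μ) * Real.Gamma (1/μ + 1) - Real.Gamma (1/μ + 1)| < η/4 := by
    intro t ht
    have := hε₀' (show dist t 1 < ε₀ by rwa [Real.dist_eq])
    rwa [Real.dist_eq] at this
  have h_up : (1-ε) ^ (-1/μ) * Real.Gamma (1/μ + 1) < Real.Gamma (1/μ + 1) + η/4 := by
    have := abs_lt.mp (hdist (1-ε) (by rw [show (1-ε) - 1 = -ε by ring, abs_neg, abs_of_pos hεpos]; exact hεlt))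
    linarith [this.2]
  have h_lo : Real.Gamma (1/μ + 1) - η/4 < (1+ε) ^ (-1/μ) * Real.Gamma (1/μ + 1) := by
    have := abs_lt.mp (hdist (1+ε) (by rw [show (1+ε) - 1 = ε by ring, abs_of_pos hεpos]; exact hεlt))
    linarith [this.1]
  -- choose δ
  have hev := Metric.tendsto_nhds.mp hglim ε hεpos
  rw [eventually_nhdsWithin_iff] at hev
  obtain ⟨δ₀, hδ₀, hδ₀'⟩ := Metric.eventually_nhds_iff.mp hev
  set δ : ℝ := min (δ₀/2) L with hδdef
  have hδpos : 0 < δ := lt_min (by linarith) hL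
  have hδL : δ ≤ L := min_le_right _ _
  have hgbound : ∀ x ∈ Set.Ioc (0:ℝ) δ, (1-ε) * x ^ μ ≤ g x ∧ g x ≤ (1+ε) * x ^ μ := by
    intro x hx
    have hx0 : 0 < x := hx.1
    have hxδ : x < δ₀ := lt_of_le_of_lt hx.2 (lt_of_le_of_lt (min_le_left _ _) (by linarith))
    have hd := hδ₀' (show dist x 0 < δ₀ by rw [Real.dist_eq, sub_zero, abs_of_pos hx0]; exact hxδ) hx0
    rw [Real.dist_eq] at hd
    have habs := abs_lt.mp hd
    have hxμ : (0:ℝ) < x ^ μ := Real.rpow_pos_of_pos hx0 _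
    have hinv : x ^ (-μ) * x ^ μ = 1 := by
      rw [← Real.rpow_add hx0]; simp
    have hrw : (x ^ (-μ) * g x) * x ^ μ = g x := by
      rw [mul_right_comm, hinv, one_mul]
    constructor
    · have h1 := mul_lt_mul_of_pos_right (show 1 - ε < x ^ (-μ) * g x by linarith [habs.1]) hxμ
      rw [hrw] at h1; linarith
    · have h1 := mul_lt_mul_of_pos_right (show x ^ (-μ) * g x < 1 + ε by linarith [habs.2]) hxμ
      rw [hrw] at h1; linarith
  -- minimum on [δ, L]
  obtain ⟨x₀, hx₀mem, hx₀min⟩ := isCompact_Icc.exists_isMinOn (Set.nonempty_Icc.mpr hδL)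
    (hg.mono (Set.Icc_subset_Icc hδpos.le le_rfl))
  have hm : 0 < g x₀ := hgpos x₀ ⟨lt_of_lt_of_le hδpos hx₀mem.1, hx₀mem.2⟩
  set m : ℝ := g x₀ with hmdef
  -- integrability of the original integrand
  have hgint : ∀ p : ℝ, IntegrableOn (fun x => Real.exp (-p * g x)) (Set.Icc 0 L) := fun p =>
    ((continuousOn_const.mul hg).rexp).integrableOn_compact isCompact_Icc
  -- three limits
  have T1 := main_model (a := 1 - ε) hμ h1ε hδpos
  have T2 := main_model (a := 1 + ε) hμ h2ε hδpos
  have T3 : Filter.Tendsto (fun p : ℝ => p ^ (1/μ) * ((L - δ) * Real.exp (-p*m)))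
      Filter.atTop (nhds 0) := by
    have h0 : Filter.Tendsto (fun p : ℝ => p ^ (1/μ) * Real.exp (-m*p)) Filter.atTop (nhds 0) :=
      tendsto_rpow_mul_exp_neg_mul_atTop_nhds_zero _ m hm
    have h1 := h0.const_mul (L - δ)
    rw [mul_zero] at h1
    apply h1.congr
    intro p
    rw [show -p*m = -m*p by ring]
    ring
  have T13 := T1.add T3
  rw [add_zero] at T13
  have hU := Metric.tendsto_nhds.mp T13 (η/4) (by linarith)
  have hLo := Metric.tendsto_nhds.mp T2 (η/4) (by linarith)
  filter_upwards [Filter.eventually_ge_atTop (1:ℝ), hU, hLo] with p hp1 hUp hLop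
  have hp0 : (0:ℝ) < p := lt_of_lt_of_le one_pos hp1
  have hpr : (0:ℝ) ≤ p ^ (1/μ) := Real.rpow_nonneg hp0.le _
  -- split the integral
  have hsub1 : Set.Ioc (0:ℝ) δ ⊆ Set.Icc 0 L :=
    Set.Ioc_subset_Icc_self.trans (Set.Icc_subset_Icc le_rfl hδL)
  have hsub2 : Set.Ioc δ L ⊆ Set.Icc 0 L :=
    Set.Ioc_subset_Icc_self.trans (Set.Icc_subset_Icc hδpos.le le_rfl)
  have hsplit : (∫ x in Set.Icc (0:ℝ) L, Real.exp (-p * g x))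
      = (∫ x in Set.Ioc (0:ℝ) δ, Real.exp (-p * g x))
        + ∫ x in Set.Ioc δ L, Real.exp (-p * g x) := by
    rw [integral_Icc_eq_integral_Ioc,
      ← setIntegral_union (Set.Ioc_disjoint_Ioc_of_le le_rfl) measurableSet_Ioc
        ((hgint p).mono_set hsub1) ((hgint p).mono_set hsub2),
      Set.Ioc_union_Ioc_eq_Ioc hδpos.le hδL]
  -- comparisons
  have hA_up : (∫ x in Set.Ioc (0:ℝ) δ, Real.exp (-p * g x))
      ≤ ∫ x in Set.Ioc (0:ℝ) δ, Real.exp (-(p*(1-ε)) * x ^ μ) := by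
    apply setIntegral_mono_on ((hgint p).mono_set hsub1)
      ((integrableOn_exp_model (mul_pos hp0 h1ε) hμ).mono_set Set.Ioc_subset_Ioi_self)
      measurableSet_Ioc
    intro x hx
    apply Real.exp_le_exp.mpr
    have hb := (hgbound x hx).1
    nlinarith [mul_le_mul_of_nonneg_left hb hp0.le]
  have hA_lo : (∫ x in Set.Ioc (0:ℝ) δ, Real.exp (-(p*(1+ε)) * x ^ μ))
      ≤ ∫ x in Set.Ioc (0:ℝ) δ, Real.exp (-p * g x) := by
    apply setIntegral_mono_on
      ((integrableOn_exp_model (mul_pos hp0 h2ε) hμ).mono_set Set.Ioc_subset_Ioi_self)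
      ((hgint p).mono_set hsub1) measurableSet_Ioc
    intro x hx
    apply Real.exp_le_exp.mpr
    have hb := (hgbound x hx).2
    nlinarith [mul_le_mul_of_nonneg_left hb hp0.le]
  have hB_up : (∫ x in Set.Ioc δ L, Real.exp (-p * g x)) ≤ (L - δ) * Real.exp (-p*m) := by
    have hconst : (∫ _x in Set.Ioc δ L, Real.exp (-p*m)) = (L - δ) * Real.exp (-p*m) := by
      rw [setIntegral_const, Real.volume_real_Ioc_of_le hδL, smul_eq_mul]
    rw [← hconst]
    apply setIntegral_mono_on ((hgint p).mono_set hsub2)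
      (integrableOn_const (by rw [Real.volume_Ioc]; exact ENNReal.ofReal_ne_top))
      measurableSet_Ioc
    intro x hx
    apply Real.exp_le_exp.mpr
    have hmx : m ≤ g x := (isMinOn_iff.mp hx₀min) x (Set.Ioc_subset_Icc_self hx)
    nlinarith [mul_le_mul_of_nonneg_left hmx hp0.le]
  have hB_lo : (0:ℝ) ≤ ∫ x in Set.Ioc δ L, Real.exp (-p * g x) :=
    setIntegral_nonneg measurableSet_Ioc fun x _ => (Real.exp_pos _).le
  -- combine
  rw [Real.dist_eq] at hUp hLop ⊢
  have hUp' := abs_lt.mp hUp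
  have hLop' := abs_lt.mp hLop
  rw [abs_lt]
  have e1 : p ^ (1/μ) * (∫ x in Set.Ioc (0:ℝ) δ, Real.exp (-p * g x))
      ≤ p ^ (1/μ) * ∫ x in Set.Ioc (0:ℝ) δ, Real.exp (-(p*(1-ε)) * x ^ μ) :=
    mul_le_mul_of_nonneg_left hA_up hpr
  have e2 : p ^ (1/μ) * (∫ x in Set.Ioc (0:ℝ) δ, Real.exp (-(p*(1+ε)) * x ^ μ))
      ≤ p ^ (1/μ) * ∫ x in Set.Ioc (0:ℝ) δ, Real.exp (-p * g x) :=
    mul_le_mul_of_nonneg_left hA_lo hpr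
  have e3 : p ^ (1/μ) * (∫ x in Set.Ioc δ L, Real.exp (-p * g x))
      ≤ p ^ (1/μ) * ((L - δ) * Real.exp (-p*m)) :=
    mul_le_mul_of_nonneg_left hB_up hpr
  have e4 : (0:ℝ) ≤ p ^ (1/μ) * ∫ x in Set.Ioc δ L, Real.exp (-p * g x) :=
    mul_nonneg hpr hB_lo
  rw [hsplit, mul_add]
  constructor
  · linarith [hLop'.1, e2, e4, h_lo]
  · linarith [hUp'.2, e1, e3, h_up]
end
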